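/- arXiv:1603.08862 — 5 statements merged into one kernel-verified Lean document; each statement's English description precedes it below -/
import Mathlib

section
/- For p ∈ (1, ∞) and any complex numbers z, w, the product (w - z) · conj(F_p(w) - F_p(z)) lies in the closed sector Σ_p = {ζ ∈ ℂ : ζ = 0 or |arg ζ| ≤ arcsin|1 - 2/p|}. -/
set_option maxHeartbeats 1000000

open Complex

noncomputable def Fp (p : ℝ) (z : ℂ) : ℂ :=
  if z = 0 then 0 else z * ((‖z‖ ^ (p - 2) : ℝ) : ℂ)

def Sector (φ : ℝ) : Set ℂ := {z : ℂ | z = 0 ∨ |z.arg| ≤ φ}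

open Real in

lemma sinh_mul_le (c t : ℝ) (hc0 : 0 ≤ c) (hc1 : c ≤ 1) (ht : 0 ≤ t) :
    Real.sinh (c * t) ≤ c * Real.sinh t := by
  have hder : ∀ x : ℝ, HasDerivAt (fun y => c * Real.sinh y - Real.sinh (c * y))
      (c * Real.cosh x - Real.cosh (c * x) * (c * 1)) x := by
    intro x
    exact ((Real.hasDerivAt_sinh x).const_mul c).sub (((hasDerivAt_id x).const_mul c).sinh)
  have hmono : Monotone (fun y => c * Real.sinh y - Real.sinh (c * y)) := by
    apply monotone_of_deriv_nonneg
    · exact fun x => (hder x).differentiableAt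
    · intro x
      rw [(hder x).deriv]
      have h1 : Real.cosh (c * x) ≤ Real.cosh x := by
        rw [Real.cosh_le_cosh, _root_.abs_mul, _root_.abs_of_nonneg hc0]
        exact mul_le_of_le_one_left (_root_.abs_nonneg x) hc1
      nlinarith
  have h0 := hmono ht
  simp only [mul_zero, Real.sinh_zero, sub_zero] at h0
  linarith [h0]

lemma sinh_sq_key (p : ℝ) (hp : 1 < p) (d : ℝ) :
    p ^ 2 * Real.sinh ((p - 2) * d) ^ 2 ≤ (p - 2) ^ 2 * Real.sinh (p * d) ^ 2 := by
  have hp0 : 0 < p := by linarith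
  have habs : ∀ x : ℝ, Real.sinh |x| ^ 2 = Real.sinh x ^ 2 := by
    intro x
    rcases _root_.abs_cases x with ⟨h, _⟩ | ⟨h, _⟩ <;> rw [h] <;> simp [Real.sinh_neg]
  rw [← habs ((p - 2) * d), ← habs (p * d)]
  have h1 : |(p - 2) * d| = (|p - 2| / p) * |p * d| := by
    rw [_root_.abs_mul, _root_.abs_mul, _root_.abs_of_pos hp0]
    field_simp
  have hc1 : |p - 2| / p ≤ 1 := by
    rw [div_le_one hp0]
    exact _root_.abs_le.2 ⟨by linarith, by linarith⟩
  have hs := sinh_mul_le (|p - 2| / p) |p * d| (by positivity) hc1 (_root_.abs_nonneg _)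
  rw [h1]
  have h2 : 0 ≤ Real.sinh (|p - 2| / p * |p * d|) :=
    Real.sinh_nonneg_iff.2 (by positivity)
  have h3 := mul_self_le_mul_self h2 hs
  have h4 : p ^ 2 * (|p - 2| / p * Real.sinh |p * d|) ^ 2 = (p - 2) ^ 2 * Real.sinh |p * d| ^ 2 := by
    rw [mul_pow, div_pow, _root_.sq_abs]
    field_simp
  nlinarith [h3, h4, sq_nonneg p]

open Real in
lemma core_exp (p : ℝ) (hp : 1 < p) (s t : ℝ) :
    4 * (p - 1) * (Real.exp s * Real.exp t * (Real.exp ((p - 2) * t) - Real.exp ((p - 2) * s))) ^ 2 ≤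
      (p - 2) ^ 2 * (((Real.exp s) ^ 2 * Real.exp ((p - 2) * s)
          + (Real.exp t) ^ 2 * Real.exp ((p - 2) * t)) ^ 2
        - (Real.exp s * Real.exp t * (Real.exp ((p - 2) * s) + Real.exp ((p - 2) * t))) ^ 2) := by
  set d := (s - t) / 2 with hd
  set E := Real.exp (p * (s + t) / 2) with hE
  have f1 : Real.exp s * Real.exp t * Real.exp ((p - 2) * t) = E * Real.exp (-((p - 2) * d)) := by
    rw [hE, ← Real.exp_add, ← Real.exp_add, ← Real.exp_add]; congr 1; rw [hd]; ring
  have f2 : Real.exp s * Real.exp t * Real.exp ((p - 2) * s) = E * Real.exp ((p - 2) * d) := by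
    rw [hE, ← Real.exp_add, ← Real.exp_add, ← Real.exp_add]; congr 1; rw [hd]; ring
  have f3 : (Real.exp s) ^ 2 * Real.exp ((p - 2) * s) = E * Real.exp (p * d) := by
    rw [sq, hE, ← Real.exp_add, ← Real.exp_add, ← Real.exp_add]; congr 1; rw [hd]; ring
  have f4 : (Real.exp t) ^ 2 * Real.exp ((p - 2) * t) = E * Real.exp (-(p * d)) := by
    rw [sq, hE, ← Real.exp_add, ← Real.exp_add, ← Real.exp_add]; congr 1; rw [hd]; ring
  have s1 : Real.exp s * Real.exp t * (Real.exp ((p - 2) * t) - Real.exp ((p - 2) * s))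
      = E * (-(2 * Real.sinh ((p - 2) * d))) := by
    rw [mul_sub, f1, f2, Real.sinh_eq]; ring
  have s4 : Real.exp s * Real.exp t * (Real.exp ((p - 2) * s) + Real.exp ((p - 2) * t))
      = E * (2 * Real.cosh ((p - 2) * d)) := by
    rw [mul_add, f1, f2, Real.cosh_eq]; ring
  have s2 : E * Real.exp (p * d) + E * Real.exp (-(p * d)) = E * (2 * Real.cosh (p * d)) := by
    rw [Real.cosh_eq]; ring
  have s3 : E * Real.exp ((p - 2) * d) + E * Real.exp (-((p - 2) * d))
      = E * (2 * Real.cosh ((p - 2) * d)) := by rw [Real.cosh_eq]; ring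
  rw [s1, s4, f3, f4, s2]
  have key := sinh_sq_key p hp d
  have hcp := Real.cosh_sq (p * d)
  have hcq := Real.cosh_sq ((p - 2) * d)
  nlinarith [mul_le_mul_of_nonneg_left key (sq_nonneg E), sq_nonneg E, hcp, hcq,
    mul_le_mul_of_nonneg_left (le_of_eq hcp) (sq_nonneg E),
    mul_le_mul_of_nonneg_left (le_of_eq hcq) (sq_nonneg E),
    mul_le_mul_of_nonneg_left (ge_of_eq hcp) (sq_nonneg E),
    mul_le_mul_of_nonneg_left (ge_of_eq hcq) (sq_nonneg E)]

lemma core_ab (p : ℝ) (hp : 1 < p) (a b : ℝ) (ha : 0 < a) (hb : 0 < b) :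
    4 * (p - 1) * (a * b * (b ^ (p - 2) - a ^ (p - 2))) ^ 2 ≤
      (p - 2) ^ 2 * ((a ^ 2 * a ^ (p - 2) + b ^ 2 * b ^ (p - 2)) ^ 2
        - (a * b * (a ^ (p - 2) + b ^ (p - 2))) ^ 2) := by
  obtain ⟨s, rfl⟩ : ∃ s, a = Real.exp s := ⟨Real.log a, (Real.exp_log ha).symm⟩
  obtain ⟨t, rfl⟩ : ∃ t, b = Real.exp t := ⟨Real.log b, (Real.exp_log hb).symm⟩
  rw [show Real.exp s ^ (p - 2) = Real.exp ((p - 2) * s) by rw [mul_comm, Real.exp_mul],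
    show Real.exp t ^ (p - 2) = Real.exp ((p - 2) * t) by rw [mul_comm, Real.exp_mul]]
  exact core_exp p hp s t

open Real in
lemma key_abstract (p a b A B X Y r : ℝ) (hp : 1 < p)
    (ha : 0 < a) (hb : 0 < b) (hA : 0 < A) (hB : 0 < B)
    (hXY : X ^ 2 + Y ^ 2 = (a * b) ^ 2)
    (hmono : 0 ≤ (a - b) * (a * A - b * B))
    (hr2 : r ^ 2 = p - 1) (hrpos : 0 < r)
    (core : 4 * (p - 1) * (a * b * (B - A)) ^ 2 ≤
      (p - 2) ^ 2 * ((a ^ 2 * A + b ^ 2 * B) ^ 2 - (a * b * (A + B)) ^ 2)) :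
    0 ≤ (a ^ 2 * A + b ^ 2 * B) - X * (A + B) ∧
      4 * (p - 1) * (Y * (B - A)) ^ 2 ≤
        (p - 2) ^ 2 * ((a ^ 2 * A + b ^ 2 * B) - X * (A + B)) ^ 2 := by
  have hXab : X ≤ a * b := by nlinarith [sq_nonneg (X - a * b), sq_nonneg Y, mul_pos ha hb]
  have hR : 0 ≤ (a ^ 2 * A + b ^ 2 * B) - X * (A + B) := by
    have h1 : X * (A + B) ≤ a * b * (A + B) :=
      mul_le_mul_of_nonneg_right hXab (by positivity)
    nlinarith [hmono]
  refine ⟨hR, ?_⟩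
  have hCS : (|p - 2| * X * (A + B) + 2 * r * |Y| * |B - A|) ^ 2 ≤
      (X ^ 2 + Y ^ 2) * ((|p - 2| * (A + B)) ^ 2 + (2 * r * |B - A|) ^ 2) := by
    rw [← _root_.sq_abs Y]
    nlinarith [sq_nonneg (X * (2 * r * |B - A|) - |Y| * (|p - 2| * (A + B)))]
  have hCS2 : (|p - 2| * X * (A + B) + 2 * r * |Y| * |B - A|) ^ 2 ≤
      (|p - 2| * (a ^ 2 * A + b ^ 2 * B)) ^ 2 := by
    have e1 : (|p - 2| * (A + B)) ^ 2 = (p - 2) ^ 2 * (A + B) ^ 2 := by rw [mul_pow, _root_.sq_abs]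
    have e2 : (2 * r * |B - A|) ^ 2 = 4 * (p - 1) * (B - A) ^ 2 := by
      rw [mul_pow, mul_pow, _root_.sq_abs, hr2]; ring
    have e3 : (|p - 2| * (a ^ 2 * A + b ^ 2 * B)) ^ 2
        = (p - 2) ^ 2 * (a ^ 2 * A + b ^ 2 * B) ^ 2 := by rw [mul_pow, _root_.sq_abs]
    rw [hXY, e1, e2] at hCS
    rw [e3]
    nlinarith [core, hCS]
  have hW : |p - 2| * X * (A + B) + 2 * r * |Y| * |B - A|
      ≤ |p - 2| * (a ^ 2 * A + b ^ 2 * B) := by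
    calc |p - 2| * X * (A + B) + 2 * r * |Y| * |B - A|
        ≤ |(|p - 2| * X * (A + B) + 2 * r * |Y| * |B - A|)| := _root_.le_abs_self _
      _ = Real.sqrt ((|p - 2| * X * (A + B) + 2 * r * |Y| * |B - A|) ^ 2) :=
          (Real.sqrt_sq_eq_abs _).symm
      _ ≤ Real.sqrt ((|p - 2| * (a ^ 2 * A + b ^ 2 * B)) ^ 2) := Real.sqrt_le_sqrt hCS2
      _ = |p - 2| * (a ^ 2 * A + b ^ 2 * B) := Real.sqrt_sq (by positivity)
  have target2 : 2 * r * |Y| * |B - A|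
      ≤ |p - 2| * ((a ^ 2 * A + b ^ 2 * B) - X * (A + B)) := by nlinarith [hW]
  have hfin := pow_le_pow_left₀ (by positivity) target2 2
  have i1 : (2 * r * |Y| * |B - A|) ^ 2 = 4 * (p - 1) * (Y * (B - A)) ^ 2 := by
    rw [mul_pow, mul_pow, mul_pow, _root_.sq_abs, _root_.sq_abs, hr2]; ring
  have i2 : (|p - 2| * ((a ^ 2 * A + b ^ 2 * B) - X * (A + B))) ^ 2
      = (p - 2) ^ 2 * ((a ^ 2 * A + b ^ 2 * B) - X * (A + B)) ^ 2 := by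
    rw [mul_pow, _root_.sq_abs]
  rw [i1, i2] at hfin
  exact hfin

lemma key_ineq (p : ℝ) (hp : 1 < p) (a b X Y : ℝ) (ha : 0 < a) (hb : 0 < b)
    (hXY : X ^ 2 + Y ^ 2 = (a * b) ^ 2) :
    0 ≤ (a ^ 2 * a ^ (p - 2) + b ^ 2 * b ^ (p - 2)) - X * (a ^ (p - 2) + b ^ (p - 2)) ∧
      4 * (p - 1) * (Y * (b ^ (p - 2) - a ^ (p - 2))) ^ 2 ≤
        (p - 2) ^ 2 * ((a ^ 2 * a ^ (p - 2) + b ^ 2 * b ^ (p - 2))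
          - X * (a ^ (p - 2) + b ^ (p - 2))) ^ 2 := by
  have hA : 0 < a ^ (p - 2) := Real.rpow_pos_of_pos ha _
  have hB : 0 < b ^ (p - 2) := Real.rpow_pos_of_pos hb _
  have haA : a * a ^ (p - 2) = a ^ (p - 1) := by
    rw [show (p - 1 : ℝ) = 1 + (p - 2) by ring, Real.rpow_add ha, Real.rpow_one]
  have hbB : b * b ^ (p - 2) = b ^ (p - 1) := by
    rw [show (p - 1 : ℝ) = 1 + (p - 2) by ring, Real.rpow_add hb, Real.rpow_one]
  have hmono : 0 ≤ (a - b) * (a * a ^ (p - 2) - b * b ^ (p - 2)) := by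
    rcases le_total a b with h | h
    · have h2 : a ^ (p - 1) ≤ b ^ (p - 1) := Real.rpow_le_rpow ha.le h (by linarith)
      have h3 := mul_nonneg (by linarith : (0:ℝ) ≤ b - a)
        (by rw [haA, hbB]; linarith : (0:ℝ) ≤ b * b ^ (p - 2) - a * a ^ (p - 2))
      nlinarith [h3]
    · have h2 : b ^ (p - 1) ≤ a ^ (p - 1) := Real.rpow_le_rpow hb.le h (by linarith)
      exact mul_nonneg (by linarith) (by rw [haA, hbB]; linarith)
  exact key_abstract p a b _ _ X Y (Real.sqrt (p - 1)) hp ha hb hA hB hXY hmono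
    (Real.sq_sqrt (by linarith)) (Real.sqrt_pos.2 (by linarith))
    (core_ab p hp a b ha hb)

lemma self_prod (p : ℝ) (v : ℂ) :
    0 ≤ (v * (starRingEnd ℂ) (Fp p v)).re ∧ (v * (starRingEnd ℂ) (Fp p v)).im = 0 := by
  by_cases hv : v = 0
  · simp [Fp, hv]
  · have hB : (0:ℝ) ≤ ‖v‖ ^ (p - 2) :=
      (Real.rpow_pos_of_pos (norm_pos_iff.mpr hv) _).le
    simp only [Fp, if_neg hv, map_mul, Complex.conj_ofReal]
    constructor
    · simp only [Complex.mul_re, Complex.mul_im, Complex.conj_re, Complex.conj_im,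
        Complex.ofReal_re, Complex.ofReal_im]
      nlinarith [sq_nonneg v.re, sq_nonneg v.im]
    · simp only [Complex.mul_re, Complex.mul_im, Complex.conj_re, Complex.conj_im,
        Complex.ofReal_re, Complex.ofReal_im]
      ring

theorem product_in_sector (p : ℝ) (hp : 1 < p) (z w : ℂ) :
    (w - z) * (starRingEnd ℂ) (Fp p w - Fp p z) ∈
      Sector (Real.arcsin |1 - 2 / p|) := by
  have hp0 : 0 < p := by linarith
  set m := |1 - 2 / p| with hm
  set P := (w - z) * (starRingEnd ℂ) (Fp p w - Fp p z) with hP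
  have main : 0 ≤ P.re ∧ P.im ^ 2 ≤ m ^ 2 * (P.re ^ 2 + P.im ^ 2) := by
    have hm2 : m ^ 2 = (p - 2) ^ 2 / p ^ 2 := by
      rw [hm, _root_.sq_abs, show (1 - 2 / p) = (p - 2) / p by field_simp, div_pow]
    by_cases hz : z = 0
    · have hP2 : P = w * (starRingEnd ℂ) (Fp p w) := by
        rw [hP, hz, sub_zero, show Fp p 0 = 0 by simp [Fp], sub_zero]
      obtain ⟨u1, u2⟩ := self_prod p w
      rw [hP2, u2]
      refine ⟨u1, by nlinarith [_root_.sq_abs (1 - 2/p), sq_nonneg ((w * (starRingEnd ℂ) (Fp p w)).re)]⟩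
    by_cases hw : w = 0
    · have hP2 : P = z * (starRingEnd ℂ) (Fp p z) := by
        rw [hP, hw, show Fp p 0 = 0 by simp [Fp], zero_sub, zero_sub, map_neg]
        ring
      obtain ⟨u1, u2⟩ := self_prod p z
      rw [hP2, u2]
      refine ⟨u1, by nlinarith [sq_nonneg (m * (z * (starRingEnd ℂ) (Fp p z)).re)]⟩
    -- main case
    · have ha : 0 < ‖z‖ := norm_pos_iff.mpr hz
      have hb : 0 < ‖w‖ := norm_pos_iff.mpr hw
      have hXY : (w.re * z.re + w.im * z.im) ^ 2 + (w.im * z.re - w.re * z.im) ^ 2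
          = (‖z‖ * ‖w‖) ^ 2 := by
        rw [mul_pow, Complex.sq_norm, Complex.sq_norm, Complex.normSq_apply, Complex.normSq_apply]
        ring
      have hPre : P.re = ((‖z‖) ^ 2 * (‖z‖) ^ (p - 2)
            + (‖w‖) ^ 2 * (‖w‖) ^ (p - 2))
          - (w.re * z.re + w.im * z.im) * ((‖z‖) ^ (p - 2)
            + (‖w‖) ^ (p - 2)) := by
        rw [hP]
        simp only [Fp, if_neg hz, if_neg hw, map_sub, map_mul, Complex.conj_ofReal]
        simp only [Complex.mul_re, Complex.mul_im, Complex.sub_re, Complex.sub_im,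
          Complex.conj_re, Complex.conj_im, Complex.ofReal_re, Complex.ofReal_im,
          Complex.sq_norm, Complex.normSq_apply]
        ring
      have hPim : P.im = (w.im * z.re - w.re * z.im)
          * ((‖w‖) ^ (p - 2) - (‖z‖) ^ (p - 2)) := by
        rw [hP]
        simp only [Fp, if_neg hz, if_neg hw, map_sub, map_mul, Complex.conj_ofReal]
        simp only [Complex.mul_re, Complex.mul_im, Complex.sub_re, Complex.sub_im,
          Complex.conj_re, Complex.conj_im, Complex.ofReal_re, Complex.ofReal_im]
        ring
      obtain ⟨k1, k2⟩ := key_ineq p hp (‖z‖) (‖w‖)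
        (w.re * z.re + w.im * z.im) (w.im * z.re - w.re * z.im) ha hb hXY
      rw [hPre, hPim]
      refine ⟨k1, ?_⟩
      rw [hm2, div_mul_eq_mul_div, le_div_iff₀ (by positivity : (0:ℝ) < p ^ 2)]
      nlinarith [k2, k1]
  -- conclude
  by_cases hPz : P = 0
  · exact Or.inl hPz
  · right
    have habs : 0 < ‖P‖ := norm_pos_iff.mpr hPz
    have hm0 : (0:ℝ) ≤ m := _root_.abs_nonneg _
    have h2 : |P.im| ≤ m * ‖P‖ := by
      have e : m ^ 2 * (P.re ^ 2 + P.im ^ 2) = (m * ‖P‖) ^ 2 := by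
        rw [mul_pow, Complex.sq_norm, Complex.normSq_apply]; ring
      have h3 := main.2
      rw [e] at h3
      calc |P.im| = Real.sqrt (P.im ^ 2) := (Real.sqrt_sq_eq_abs _).symm
        _ ≤ Real.sqrt ((m * ‖P‖) ^ 2) := Real.sqrt_le_sqrt h3
        _ = m * ‖P‖ := Real.sqrt_sq (by positivity)
    have harg2 : |P.arg| ≤ Real.pi / 2 := Complex.abs_arg_le_pi_div_two_iff.2 main.1
    have hsin : Real.sin |P.arg| = |Real.sin P.arg| := by
      rcases _root_.abs_cases P.arg with ⟨h1, hge⟩ | ⟨h1, hlt⟩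
      · rw [h1, _root_.abs_of_nonneg (Real.sin_nonneg_of_nonneg_of_le_pi hge (Complex.arg_le_pi P))]
      · have hnegpi : -Real.pi < P.arg := Complex.neg_pi_lt_arg P
        have hs : 0 ≤ Real.sin (-P.arg) :=
          Real.sin_nonneg_of_nonneg_of_le_pi (by linarith) (by linarith)
        rw [h1, _root_.abs_of_nonpos (by rw [Real.sin_neg] at hs; linarith), Real.sin_neg]
    have hfrac : |Real.sin P.arg| ≤ m := by
      rw [Complex.sin_arg, _root_.abs_div, abs_norm]
      rw [div_le_iff₀ habs]
      linarith [h2]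
    calc |P.arg| = Real.arcsin (Real.sin |P.arg|) :=
          (Real.arcsin_sin (by linarith [_root_.abs_nonneg P.arg, Real.pi_div_two_pos]) harg2).symm
      _ = Real.arcsin |Real.sin P.arg| := by rw [hsin]
      _ ≤ Real.arcsin m := Real.monotone_arcsin hfrac
end

section
/- For p ∈ (1, ∞), the closure of the set {(w - z) · conj(F_p(w) - F_p(z)) : z, w ∈ ℂ} equals the sector Σ_p. -/
open Complex

-- helper: nonneg from derivative
lemma nonneg_of_deriv (f f' : ℝ → ℝ) (hf : ∀ x, HasDerivAt f (f' x) x)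
    (h' : ∀ x, 0 < x → 0 ≤ f' x) (h0 : f 0 = 0) : ∀ x, 0 ≤ x → 0 ≤ f x := by
  have hm : MonotoneOn f (Set.Ici 0) := by
    apply monotoneOn_of_deriv_nonneg (convex_Ici 0)
    · exact fun x _ => (hf x).continuousAt.continuousWithinAt
    · intro x hx
      exact (hf x).differentiableAt.differentiableWithinAt
    · intro x hx
      rw [(hf x).deriv]
      rw [interior_Ici] at hx
      exact h' x hx
  intro x hx
  have := hm (by simp : (0:ℝ) ∈ Set.Ici 0) (by simpa using hx) hx
  linarith [this, h0.symm ▸ this]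

lemma sinh_lemma (q p : ℝ) (h0 : 0 ≤ q) (hqp : q ≤ p) :
    ∀ x, 0 ≤ x → p * Real.sinh (q*x) ≤ q * Real.sinh (p*x) := by
  have key : ∀ x, 0 ≤ x → 0 ≤ q * Real.sinh (p*x) - p * Real.sinh (q*x) := by
    apply nonneg_of_deriv _ (fun x => q * (Real.cosh (p*x) * p) - p * (Real.cosh (q*x) * q))
    · intro x
      have h1 : HasDerivAt (fun x : ℝ => Real.sinh (p*x)) (Real.cosh (p*x) * p) x := by
        simpa using ((hasDerivAt_id x).const_mul p).sinh
      have h2 : HasDerivAt (fun x : ℝ => Real.sinh (q*x)) (Real.cosh (q*x) * q) x := by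
        simpa using ((hasDerivAt_id x).const_mul q).sinh
      exact (h1.const_mul q).sub (h2.const_mul p)
    · intro x hx
      have hc : Real.cosh (q*x) ≤ Real.cosh (p*x) := by
        rw [Real.cosh_le_cosh]
        rw [_root_.abs_of_nonneg (by positivity), _root_.abs_of_nonneg (by nlinarith)]
        nlinarith
      nlinarith [mul_le_mul_of_nonneg_left hc (mul_nonneg h0 (h0.trans hqp))]
    · simp
  intro x hx
  linarith [key x hx]

lemma cosh_ineq (q p x : ℝ) (h0 : 0 ≤ q) (hqp : q ≤ p) :
    p^2 * Real.cosh (q*x) ≤ q^2 * Real.cosh (p*x) + (p^2 - q^2) := by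
  have main : ∀ y, 0 ≤ y → 0 ≤ q^2 * Real.cosh (p*y) + (p^2-q^2) - p^2 * Real.cosh (q*y) := by
    apply nonneg_of_deriv _
      (fun y => q^2 * (Real.sinh (p*y) * p) - p^2 * (Real.sinh (q*y) * q))
    · intro y
      have h1 : HasDerivAt (fun y : ℝ => Real.cosh (p*y)) (Real.sinh (p*y) * p) y := by
        simpa using ((hasDerivAt_id y).const_mul p).cosh
      have h2 : HasDerivAt (fun y : ℝ => Real.cosh (q*y)) (Real.sinh (q*y) * q) y := by
        simpa using ((hasDerivAt_id y).const_mul q).cosh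
      exact ((h1.const_mul (q^2)).add_const (p^2-q^2)).sub (h2.const_mul (p^2))
    · intro y hy
      have := sinh_lemma q p h0 hqp y hy.le
      nlinarith [mul_le_mul_of_nonneg_left this (mul_nonneg h0 (h0.trans hqp))]
    · simp
  rcases le_total 0 x with hx | hx
  · linarith [main x hx]
  · have := main (-x) (by linarith)
    rw [show p * -x = -(p*x) by ring, show q * -x = -(q*x) by ring, Real.cosh_neg, Real.cosh_neg] at this
    linarith

lemma crux (p a b : ℝ) (hp : 1 < p) (ha : 0 < a) (hb : 0 < b) :
    4*(p-1)*(a*b*(a^(p-2) - b^(p-2)))^2 + (p-2)^2*(a*b*(a^(p-2) + b^(p-2)))^2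
      ≤ (p-2)^2*(a^2*a^(p-2) + b^2*b^(p-2))^2 := by
  obtain ⟨α, rfl⟩ : ∃ α, a = Real.exp α := ⟨Real.log a, (Real.exp_log ha).symm⟩
  obtain ⟨β, rfl⟩ : ∃ β, b = Real.exp β := ⟨Real.log b, (Real.exp_log hb).symm⟩
  have hra : Real.exp α ^ (p-2) = Real.exp ((p-2)*α) := by
    rw [Real.rpow_def_of_pos (Real.exp_pos α), Real.log_exp, mul_comm]
  have hrb : Real.exp β ^ (p-2) = Real.exp ((p-2)*β) := by
    rw [Real.rpow_def_of_pos (Real.exp_pos β), Real.log_exp, mul_comm]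
  rw [hra, hrb]
  set X1 := Real.exp ((p-1)*α + β) with hX1
  set X2 := Real.exp (α + (p-1)*β) with hX2
  set X3 := Real.exp (p*α) with hX3
  set X4 := Real.exp (p*β) with hX4
  have e1 : Real.exp α * Real.exp β * Real.exp ((p-2)*α) = X1 := by
    rw [← Real.exp_add, ← Real.exp_add, hX1]; exact congrArg Real.exp (by ring)
  have e2 : Real.exp α * Real.exp β * Real.exp ((p-2)*β) = X2 := by
    rw [← Real.exp_add, ← Real.exp_add, hX2]; exact congrArg Real.exp (by ring)
  have i1 : Real.exp α * Real.exp β * (Real.exp ((p-2)*α) - Real.exp ((p-2)*β)) = X1 - X2 := by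
    rw [mul_sub, e1, e2]
  have i2 : Real.exp α * Real.exp β * (Real.exp ((p-2)*α) + Real.exp ((p-2)*β)) = X1 + X2 := by
    rw [mul_add, e1, e2]
  have i3 : Real.exp α ^ 2 * Real.exp ((p-2)*α) = X3 := by
    rw [sq, ← Real.exp_add, ← Real.exp_add, hX3]; exact congrArg Real.exp (by ring)
  have i4 : Real.exp β ^ 2 * Real.exp ((p-2)*β) = X4 := by
    rw [sq, ← Real.exp_add, ← Real.exp_add, hX4]; exact congrArg Real.exp (by ring)
  rw [i1, i2, i3, i4]
  have hq : |p - 2| ≤ p := abs_le.mpr ⟨by linarith, by linarith⟩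
  have base := cosh_ineq (|p - 2|) p (α - β) (abs_nonneg _) hq
  rw [Real.cosh_eq, Real.cosh_eq, _root_.sq_abs] at base
  have habs : Real.exp (|p - 2| * (α-β)) + Real.exp (-(|p - 2| * (α-β)))
      = Real.exp ((p-2)*(α-β)) + Real.exp (-((p-2)*(α-β))) := by
    rcases abs_cases (p-2) with ⟨h,_⟩|⟨h,_⟩ <;> rw [h]
    rw [show -(p-2)*(α-β) = -((p-2)*(α-β)) by ring, neg_neg]; ring
  rw [habs] at base
  have hM := Real.exp_pos (p*(α+β))
  have base2 := mul_le_mul_of_nonneg_right base hM.le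
  have j1 : Real.exp ((p-2)*(α-β)) * Real.exp (p*(α+β)) = X1*X1 := by
    rw [← Real.exp_add, hX1, ← Real.exp_add]; exact congrArg Real.exp (by ring)
  have j2 : Real.exp (-((p-2)*(α-β))) * Real.exp (p*(α+β)) = X2*X2 := by
    rw [← Real.exp_add, hX2, ← Real.exp_add]; exact congrArg Real.exp (by ring)
  have j3 : Real.exp (p*(α-β)) * Real.exp (p*(α+β)) = X3*X3 := by
    rw [← Real.exp_add, hX3, ← Real.exp_add]; exact congrArg Real.exp (by ring)
  have j4 : Real.exp (-(p*(α-β))) * Real.exp (p*(α+β)) = X4*X4 := by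
    rw [← Real.exp_add, hX4, ← Real.exp_add]; exact congrArg Real.exp (by ring)
  have j5 : Real.exp (p*(α+β)) = X3*X4 := by
    rw [hX3, hX4, ← Real.exp_add]; exact congrArg Real.exp (by ring)
  have key : p^2*(X1*X1 + X2*X2) ≤ (p-2)^2*(X3*X3+X4*X4) + 2*(p^2-(p-2)^2)*(X3*X4) := by
    calc p^2*(X1*X1 + X2*X2)
        = 2*(p ^ 2 * ((Real.exp ((p-2)*(α-β)) + Real.exp (-((p-2)*(α-β))))/2) * Real.exp (p*(α+β))) := by
          linear_combination (-(p^2:ℝ))*j1 - p^2*j2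
      _ ≤ 2*(((p-2) ^ 2 * ((Real.exp (p*(α-β)) + Real.exp (-(p*(α-β))))/2) + (p ^ 2 - (p-2) ^ 2)) * Real.exp (p*(α+β))) := by
          linarith [base2]
      _ = (p-2)^2*(X3*X3+X4*X4) + 2*(p^2-(p-2)^2)*(X3*X4) := by
          linear_combination ((p-2)^2:ℝ)*j3 + (p-2)^2*j4 + 2*(p^2-(p-2)^2)*j5
  have j6 : X1 * X2 = X3 * X4 := by
    rw [hX1, hX2, hX3, hX4, ← Real.exp_add, ← Real.exp_add]; exact congrArg Real.exp (by ring)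
  calc 4*(p-1)*(X1-X2)^2 + (p-2)^2*(X1+X2)^2
      = p^2*(X1*X1+X2*X2) + (2*(p-2)^2-8*(p-1))*(X1*X2) := by ring
    _ = p^2*(X1*X1+X2*X2) + (2*(p-2)^2-8*(p-1))*(X3*X4) := by rw [j6]
    _ ≤ ((p-2)^2*(X3*X3+X4*X4) + 2*(p^2-(p-2)^2)*(X3*X4)) + (2*(p-2)^2-8*(p-1))*(X3*X4) := by
        linarith [key]
    _ = (p-2)^2*(X3+X4)^2 := by ring

lemma cs2 (u1 u2 v1 v2 : ℝ) :
    u1*v1 + u2*v2 ≤ Real.sqrt (u1^2+u2^2) * Real.sqrt (v1^2+v2^2) := by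
  have h2 : (u1*v1+u2*v2)^2 ≤ (u1^2+u2^2)*(v1^2+v2^2) := by nlinarith [sq_nonneg (u1*v2-u2*v1)]
  calc u1*v1+u2*v2 ≤ |u1*v1+u2*v2| := le_abs_self _
    _ = Real.sqrt ((u1*v1+u2*v2)^2) := (Real.sqrt_sq_eq_abs _).symm
    _ ≤ Real.sqrt ((u1^2+u2^2)*(v1^2+v2^2)) := Real.sqrt_le_sqrt h2
    _ = _ := Real.sqrt_mul (by positivity) _

lemma le_of_sq_le_sq' (x y : ℝ) (hx : 0 ≤ x) (hy : 0 ≤ y) (h : x^2 ≤ y^2) : x ≤ y := by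
  calc x = Real.sqrt (x^2) := (Real.sqrt_sq hx).symm
    _ ≤ Real.sqrt (y^2) := Real.sqrt_le_sqrt h
    _ = y := Real.sqrt_sq hy

lemma bound_of_re_im (p : ℝ) (hp : 1 < p) (ζ : ℂ) (hre : 0 ≤ ζ.re)
    (him : 4*(p-1) * ζ.im^2 ≤ (p-2)^2 * ζ.re^2) :
    2*Real.sqrt (p-1) * ‖ζ‖ ≤ p * ζ.re := by
  have hp1 : (0:ℝ) ≤ p - 1 := by linarith
  have hT : (2*Real.sqrt (p-1))^2 = 4*(p-1) := by
    rw [mul_pow, Real.sq_sqrt hp1]; ring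
  have habs : ‖ζ‖ = Real.sqrt (ζ.re^2 + ζ.im^2) := by
    rw [Complex.norm_def, Complex.normSq_apply]; ring_nf
  have h1 : (2*Real.sqrt (p-1) * ‖ζ‖)^2 ≤ (p*ζ.re)^2 := by
    rw [mul_pow, hT, habs, Real.sq_sqrt (by positivity)]
    nlinarith [him]
  exact le_of_sq_le_sq' _ _ (by positivity) (mul_nonneg (by linarith) hre) h1

set_option maxHeartbeats 1000000 in
lemma sector_bound (p : ℝ) (hp : 1 < p) (z w : ℂ) :
    2*Real.sqrt (p-1) * ‖(w - z) * (starRingEnd ℂ) (Fp p w - Fp p z)‖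
      ≤ p * ((w - z) * (starRingEnd ℂ) (Fp p w - Fp p z)).re := by
  have hreal : ∀ v : ℂ, v ≠ 0 →
      2*Real.sqrt (p-1) * ‖v * (starRingEnd ℂ) (Fp p v - Fp p 0)‖
        ≤ p * (v * (starRingEnd ℂ) (Fp p v - Fp p 0)).re := by
    intro v hv
    have h0 : Fp p 0 = 0 := by simp [Fp]
    have hFv : Fp p v = v * ((‖v‖ ^ (p-2) : ℝ) : ℂ) := by simp [Fp, hv]
    have hvv : v * (starRingEnd ℂ) (Fp p v - Fp p 0)
        = ((Complex.normSq v * (‖v‖ ^ (p-2)) : ℝ) : ℂ) := by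
      rw [h0, sub_zero, hFv, map_mul, Complex.conj_ofReal,
        show v * ((starRingEnd ℂ) v * ((‖v‖ ^ (p-2) : ℝ) : ℂ))
          = v * (starRingEnd ℂ) v * ((‖v‖ ^ (p-2) : ℝ) : ℂ) by ring,
        Complex.mul_conj]
      push_cast; ring
    apply bound_of_re_im p hp _ _ _
    · rw [hvv]; simp only [Complex.ofReal_re]
      exact mul_nonneg (Complex.normSq_nonneg v) (Real.rpow_nonneg (norm_nonneg v) _)
    · rw [hvv]; simp only [Complex.ofReal_im, Complex.ofReal_re]
      have h9 : (0:ℝ) ≤ Complex.normSq v * ‖v‖ ^ (p-2) :=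
        mul_nonneg (Complex.normSq_nonneg v) (Real.rpow_nonneg (norm_nonneg v) _)
      nlinarith
  by_cases hz : z = 0
  · by_cases hw : w = 0
    · simp [hz, hw, Fp]
    · simpa [hz] using hreal w hw
  · by_cases hw : w = 0
    · have := hreal z hz
      have heq : (w - z) * (starRingEnd ℂ) (Fp p w - Fp p z)
          = z * (starRingEnd ℂ) (Fp p z - Fp p 0) := by
        rw [hw, show Fp p 0 = 0 by simp [Fp]]
        simp only [zero_sub, sub_zero, map_neg]; ring
      rw [heq]; exact this
    · set ζ := (w - z) * (starRingEnd ℂ) (Fp p w - Fp p z) with hζ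
      set a := ‖z‖ with hadef
      set b := ‖w‖ with hbdef
      have ha : 0 < a := norm_pos_iff.mpr hz
      have hb : 0 < b := norm_pos_iff.mpr hw
      have hc := crux p a b hp ha hb
      set A := a^(p-2) with hAdef
      set B := b^(p-2) with hBdef
      have hA : 0 < A := Real.rpow_pos_of_pos ha _
      have hB : 0 < B := Real.rpow_pos_of_pos hb _
      set u := z * (starRingEnd ℂ) w with hudef
      have hnz : Complex.normSq z = a^2 := (Complex.sq_norm z).symm
      have hnw : Complex.normSq w = b^2 := (Complex.sq_norm w).symm
      have hzeta : ζ = ((Complex.normSq w * B + Complex.normSq z * A : ℝ) : ℂ)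
          - (starRingEnd ℂ) u * ((A:ℝ) : ℂ) - u * ((B:ℝ) : ℂ) := by
        rw [hζ, show Fp p w = w * ((B : ℝ) : ℂ) by rw [Fp]; simp [hw, hBdef, hbdef],
            show Fp p z = z * ((A : ℝ) : ℂ) by rw [Fp]; simp [hz, hAdef, hadef]]
        rw [map_sub, map_mul, map_mul, Complex.conj_ofReal, Complex.conj_ofReal]
        rw [show (w - z) * ((starRingEnd ℂ) w * ((B:ℝ):ℂ) - (starRingEnd ℂ) z * ((A:ℝ):ℂ))
            = (w * (starRingEnd ℂ) w) * ((B:ℝ):ℂ) + (z * (starRingEnd ℂ) z) * ((A:ℝ):ℂ)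
              - (w * (starRingEnd ℂ) z) * ((A:ℝ):ℂ) - (z * (starRingEnd ℂ) w) * ((B:ℝ):ℂ) by ring,
          Complex.mul_conj, Complex.mul_conj,
          show w * (starRingEnd ℂ) z = (starRingEnd ℂ) u by
            rw [hudef, map_mul, Complex.conj_conj]; ring]
        push_cast; ring
      have hre : ζ.re = a^2*A + b^2*B - u.re*(A+B) := by
        rw [hzeta]
        simp only [Complex.sub_re, Complex.mul_re, Complex.conj_re, Complex.conj_im,
          Complex.ofReal_re, Complex.ofReal_im, hnz, hnw]
        ring
      have him : ζ.im = u.im*(A-B) := by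
        rw [hzeta]
        simp only [Complex.sub_im, Complex.mul_im, Complex.conj_re, Complex.conj_im,
          Complex.ofReal_re, Complex.ofReal_im]
        ring
      have hu2 : u.re^2 + u.im^2 = (a*b)^2 := by
        have h1 : Complex.normSq u = Complex.normSq z * Complex.normSq w := by
          rw [hudef, Complex.normSq_mul, Complex.normSq_conj]
        calc u.re^2+u.im^2 = Complex.normSq u := by rw [Complex.normSq_apply]; ring
          _ = Complex.normSq z * Complex.normSq w := h1
          _ = (a*b)^2 := by rw [hnz, hnw]; ring
      have hure : u.re ≤ a*b := by
        calc u.re ≤ |u.re| := le_abs_self _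
          _ ≤ ‖u‖ := Complex.abs_re_le_norm u
          _ = a*b := by rw [hudef, norm_mul, Complex.norm_conj]
      have hq1 : (0:ℝ) ≤ p - 1 := by linarith
      set T := 2*Real.sqrt (p-1) with hTdef
      have hT0 : 0 ≤ T := by positivity
      have hT2 : T^2 = 4*(p-1) := by rw [hTdef, mul_pow, Real.sq_sqrt hq1]; ring
      have haA : a*A = a^(p-1) := by
        rw [hAdef, show p-1 = 1+(p-2) by ring, Real.rpow_add ha, Real.rpow_one]
      have hbB : b*B = b^(p-1) := by
        rw [hBdef, show p-1 = 1+(p-2) by ring, Real.rpow_add hb, Real.rpow_one]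
      have hmono : 0 ≤ (a-b)*(a*A-b*B) := by
        rw [haA, hbB]
        rcases le_total a b with h|h
        · have := Real.rpow_le_rpow ha.le h hq1
          nlinarith
        · have := Real.rpow_le_rpow hb.le h hq1
          nlinarith
      have hre0 : 0 ≤ ζ.re := by
        have hid : a^2*A + b^2*B - u.re*(A+B) = (a-b)*(a*A-b*B) + (A+B)*(a*b-u.re) := by ring
        rw [hre, hid]
        exact add_nonneg hmono (mul_nonneg (add_nonneg hA.le hB.le) (sub_nonneg.mpr hure))
      have main : ∀ σ : ℝ, σ = 1 ∨ σ = -1 → σ*(T*ζ.im) ≤ |p - 2| * ζ.re := by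
        intro σ hσ
        have hσ2 : σ^2 = 1 := by rcases hσ with h|h <;> rw [h] <;> norm_num
        have cs := cs2 u.im u.re (σ*T*(A-B)) (|p - 2| * (A+B))
        have habs2 : |p - 2|^2 = (p-2)^2 := _root_.sq_abs _
        have hsum : (σ*T*(A-B))^2 + (|p - 2| * (A+B))^2 = T^2*(A-B)^2 + (p-2)^2*(A+B)^2 := by
          rcases hσ with h|h <;> rw [h] <;> linear_combination ((A+B)^2) * habs2
        have h5 : Real.sqrt (u.im^2 + u.re^2) = a*b := by
          rw [show u.im^2+u.re^2 = (a*b)^2 by linarith [hu2], Real.sqrt_sq (by positivity)]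
        rw [h5, hsum] at cs
        have h6 : a*b*Real.sqrt (T^2*(A-B)^2 + (p-2)^2*(A+B)^2) ≤ |p - 2| * (a^2*A+b^2*B) := by
          apply le_of_sq_le_sq' _ _ (by positivity) (by positivity)
          have hs : Real.sqrt (T^2*(A-B)^2 + (p-2)^2*(A+B)^2)^2
              = T^2*(A-B)^2 + (p-2)^2*(A+B)^2 := Real.sq_sqrt (by positivity)
          calc (a*b*Real.sqrt (T^2*(A-B)^2 + (p-2)^2*(A+B)^2))^2
              = (a*b)^2 * (Real.sqrt (T^2*(A-B)^2 + (p-2)^2*(A+B)^2))^2 := by ring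
            _ = (a*b)^2*(T^2*(A-B)^2+(p-2)^2*(A+B)^2) := by rw [hs]
            _ = 4*(p-1)*(a*b*(A-B))^2 + (p-2)^2*(a*b*(A+B))^2 := by rw [hT2]; ring
            _ ≤ (p-2)^2*(a^2*A+b^2*B)^2 := hc
            _ = (|p - 2| * (a^2*A+b^2*B))^2 := by rw [mul_pow, _root_.sq_abs]
        calc σ*(T*ζ.im) = u.im*(σ*T*(A-B)) := by rw [him]; ring
          _ ≤ a*b*Real.sqrt (T^2*(A-B)^2 + (p-2)^2*(A+B)^2) - u.re*(|p - 2| * (A+B)) := by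
              linarith [cs]
          _ ≤ |p - 2| * (a^2*A+b^2*B) - u.re*(|p - 2| * (A+B)) := by linarith [h6]
          _ = |p - 2| * ζ.re := by rw [hre]; ring
      have h7 : (T*ζ.im)^2 ≤ (p-2)^2*ζ.re^2 := by
        have hplus := main 1 (Or.inl rfl)
        have hminus := main (-1) (Or.inr rfl)
        calc (T*ζ.im)^2 ≤ (|p - 2| * ζ.re)^2 :=
              sq_le_sq' (by linarith [hminus]) (by linarith [hplus])
          _ = (p-2)^2*ζ.re^2 := by rw [mul_pow, _root_.sq_abs]
      apply bound_of_re_im p hp ζ hre0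
      calc 4*(p-1)*ζ.im^2 = (T*ζ.im)^2 := by rw [mul_pow, hT2]
        _ ≤ (p-2)^2*ζ.re^2 := h7

lemma cos_phi (p : ℝ) (hp : 1 < p) :
    Real.cos (Real.arcsin |1 - 2/p|) = 2*Real.sqrt (p-1)/p := by
  have hp0 : (0:ℝ) < p := lt_trans one_pos hp
  rw [Real.cos_arcsin, _root_.sq_abs]
  have h1 : 1 - (1-2/p)^2 = (4*(p-1))/p^2 := by field_simp; ring
  have h2 : (4*(p-1))/p^2 = (2*Real.sqrt (p-1)/p)^2 := by
    rw [div_pow, mul_pow, Real.sq_sqrt (by linarith)]; ring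
  rw [h1, h2, Real.sqrt_sq (by positivity)]

lemma mem_sector_iff (p : ℝ) (hp : 1 < p) (ζ : ℂ) :
    ζ ∈ Sector (Real.arcsin |1 - 2/p|) ↔ 2*Real.sqrt (p-1) * ‖ζ‖ ≤ p * ζ.re := by
  have hp0 : (0:ℝ) < p := lt_trans one_pos hp
  set φ := Real.arcsin |1 - 2/p| with hφdef
  have hφ0 : 0 ≤ φ := Real.arcsin_nonneg.mpr (abs_nonneg _)
  have hφ2 : φ ≤ Real.pi/2 := Real.arcsin_le_pi_div_two _
  have hcos : Real.cos φ = 2*Real.sqrt (p-1)/p := cos_phi p hp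
  have hπ : Real.pi/2 ≤ Real.pi := by linarith [Real.pi_pos]
  constructor
  · rintro (rfl | harg)
    · simp
    · by_cases hζ : ζ = 0
      · simp [hζ]
      · have habs : 0 < ‖ζ‖ := norm_pos_iff.mpr hζ
        have hcc : Real.cos |ζ.arg| = ζ.re / ‖ζ‖ := by
          rw [Real.cos_abs]; exact Complex.cos_arg hζ
        have hmono : Real.cos φ ≤ Real.cos |ζ.arg| := by
          apply Real.cos_le_cos_of_nonneg_of_le_pi (abs_nonneg _) (by linarith) harg
        rw [hcos, hcc] at hmono
        rw [div_le_div_iff₀ hp0 habs] at hmono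
        linarith [hmono]
  · intro h
    by_cases hζ : ζ = 0
    · exact Or.inl hζ
    · right
      have habs : 0 < ‖ζ‖ := norm_pos_iff.mpr hζ
      by_contra h'
      push_neg at h'
      have hlt : Real.cos |ζ.arg| < Real.cos φ := by
        apply Real.cos_lt_cos_of_nonneg_of_le_pi hφ0 (Complex.abs_arg_le_pi ζ) h'
      have hcc : Real.cos |ζ.arg| = ζ.re / ‖ζ‖ := by
        rw [Real.cos_abs]; exact Complex.cos_arg hζ
      rw [hcc, hcos] at hlt
      rw [div_lt_div_iff₀ habs hp0] at hlt
      linarith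

lemma Fp_real_smul (p : ℝ) (t : ℝ) (ht : 0 < t) (z : ℂ) :
    Fp p ((t:ℂ)*z) = ((t^(p-1) : ℝ) : ℂ) * Fp p z := by
  by_cases hz : z = 0
  · simp [hz, Fp]
  · have ht0 : (t:ℂ) ≠ 0 := by exact_mod_cast ht.ne'
    have htz : (t:ℂ)*z ≠ 0 := mul_ne_zero ht0 hz
    rw [Fp, Fp, if_neg htz, if_neg hz]
    have habs : ‖(t:ℂ)*z‖ = t * ‖z‖ := by
      rw [norm_mul, Complex.norm_real, Real.norm_eq_abs, abs_of_pos ht]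
    rw [habs, Real.mul_rpow ht.le (norm_nonneg z)]
    have ht1 : t^(p-2) * t = t^(p-1) := by
      rw [show p-1 = (p-2)+1 by ring, Real.rpow_add ht, Real.rpow_one]
    rw [← ht1]
    push_cast
    ring

lemma S_smul (p : ℝ) (hp : 1 < p) (r : ℝ) (hr : 0 < r) (ζ : ℂ)
    (h : ζ ∈ {ζ : ℂ | ∃ z w : ℂ, ζ = (w - z) * (starRingEnd ℂ) (Fp p w - Fp p z)}) :
    ((r:ℝ):ℂ) * ζ ∈ {ζ : ℂ | ∃ z w : ℂ, ζ = (w - z) * (starRingEnd ℂ) (Fp p w - Fp p z)} := by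
  have hp0 : (0:ℝ) < p := lt_trans one_pos hp
  obtain ⟨z, w, rfl⟩ := h
  set t := r^(1/p) with htdef
  have ht : 0 < t := Real.rpow_pos_of_pos hr _
  refine ⟨(t:ℂ)*z, (t:ℂ)*w, ?_⟩
  rw [Fp_real_smul p t ht, Fp_real_smul p t ht]
  have hr2 : r = t * t^(p-1) := by
    have h1 : t * t^(p-1) = t^p := by
      have := Real.rpow_add ht 1 (p-1)
      rw [Real.rpow_one, show 1+(p-1) = p by ring] at this
      exact this.symm
    have h2 : t^p = r := by
      rw [htdef, ← Real.rpow_mul hr.le, show (1/p)*p = 1 by field_simp, Real.rpow_one]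
    rw [h1, h2]
  rw [show ((t^(p-1):ℝ):ℂ) * Fp p w - ((t^(p-1):ℝ):ℂ) * Fp p z
      = ((t^(p-1):ℝ):ℂ) * (Fp p w - Fp p z) by ring,
    map_mul, Complex.conj_ofReal,
    show (r:ℂ) = ((t * t^(p-1) : ℝ):ℂ) by exact_mod_cast congrArg Complex.ofReal hr2]
  push_cast
  ring

lemma L_mem_closure (p : ℝ) (hp : 1 < p) (θ : ℝ) :
    (1 : ℂ) + (((p-2) * Real.cos θ : ℝ) : ℂ) * ((Real.cos θ : ℂ) + (Real.sin θ : ℂ)*Complex.I)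
      ∈ closure {ζ : ℂ | ∃ z w : ℂ, ζ = (w - z) * (starRingEnd ℂ) (Fp p w - Fp p z)} := by
  set c := Real.cos θ with hcdef
  set s := Real.sin θ with hsdef
  have hcs : c^2 + s^2 = 1 := by rw [hcdef, hsdef]; exact Real.cos_sq_add_sin_sq θ
  set u : ℂ := (c:ℂ) + (s:ℂ)*Complex.I with hudef
  have hure : u.re = c := by simp [hudef]
  have huim : u.im = s := by simp [hudef]
  have hconj : (starRingEnd ℂ) u = (c:ℂ) - (s:ℂ)*Complex.I := by
    rw [hudef, map_add, map_mul, Complex.conj_ofReal, Complex.conj_ofReal, Complex.conj_I]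
    ring
  have hu1 : u * (starRingEnd ℂ) u = 1 := by
    rw [hudef, hconj]
    have h1 : ((c:ℂ) + (s:ℂ)*Complex.I) * ((c:ℂ) - (s:ℂ)*Complex.I)
        = ((c^2+s^2 : ℝ):ℂ) := by
      push_cast
      ring_nf
      rw [Complex.I_sq]
      ring
    rw [h1, hcs, Complex.ofReal_one]
  set q : ℝ → ℝ := fun ε => 1 + 2*c*ε + ε^2 with hqdef
  set g : ℝ → ℂ := fun ε => (1 + (ε:ℂ) * (starRingEnd ℂ) u) * (((q ε ^ ((p-2)/2) : ℝ)) : ℂ)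
    with hgdef
  -- derivative of q
  have hq : HasDerivAt q (2*c) 0 := by
    have h1 : HasDerivAt (fun x : ℝ => 2*c*x) (2*c) 0 := by
      simpa using (hasDerivAt_id (0:ℝ)).const_mul (2*c)
    have h2 : HasDerivAt (fun x : ℝ => x^2) 0 (0:ℝ) := by
      simpa using hasDerivAt_pow 2 (0:ℝ)
    have := (h1.const_add 1).add h2
    simp only [add_zero] at this
    exact this
  have hq0 : q 0 = 1 := by simp [hqdef]
  have hrpow : HasDerivAt (fun y : ℝ => y ^ ((p-2)/2)) ((p-2)/2) 1 := by
    have := Real.hasDerivAt_rpow_const (x := (1:ℝ)) (p := (p-2)/2) (Or.inl one_ne_zero)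
    simpa using this
  have hcomp : HasDerivAt (fun ε => q ε ^ ((p-2)/2)) ((p-2)/2 * (2*c)) 0 := by
    have := HasDerivAt.comp (0:ℝ) (hq0 ▸ hrpow) hq
    exact this
  have hof : HasDerivAt (fun ε => ((q ε ^ ((p-2)/2) : ℝ) : ℂ)) (((p-2)/2 * (2*c) : ℝ) : ℂ) 0 := by
    have := Complex.ofRealCLM.hasFDerivAt.comp_hasDerivAt 0 hcomp
    exact this
  have hlin : HasDerivAt (fun ε : ℝ => (1:ℂ) + (ε:ℂ) * (starRingEnd ℂ) u) ((starRingEnd ℂ) u) 0 := by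
    have hid : HasDerivAt (fun ε : ℝ => (ε:ℂ)) 1 0 := by
      have := Complex.ofRealCLM.hasDerivAt (x := (0:ℝ))
      simp only [Complex.ofRealCLM_apply, Complex.ofReal_one] at this
      exact this
    simpa using (hid.mul_const ((starRingEnd ℂ) u)).const_add 1
  have hg : HasDerivAt g ((starRingEnd ℂ) u + (((p-2)*c : ℝ) : ℂ)) 0 := by
    have := hlin.mul hof
    simp only [hq0, Complex.ofReal_zero, zero_mul, add_zero, mul_one] at this
    refine this.congr_deriv ?_
    rw [Real.one_rpow]
    push_cast
    ring
  have hslope := hasDerivAt_iff_tendsto_slope.mp hg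
  have hsub : nhdsWithin (0:ℝ) (Set.Ioi 0) ≤ nhdsWithin 0 {(0:ℝ)}ᶜ :=
    nhdsWithin_mono 0 (fun x hx => ne_of_gt hx)
  have h8 : Filter.Tendsto (fun ε => u * slope g 0 ε) (nhdsWithin (0:ℝ) (Set.Ioi 0))
      (nhds (u * ((starRingEnd ℂ) u + (((p-2)*c : ℝ) : ℂ)))) :=
    ((hslope.mono_left hsub).const_mul u)
  have hL : u * ((starRingEnd ℂ) u + (((p-2)*c : ℝ) : ℂ))
      = (1 : ℂ) + (((p-2) * c : ℝ) : ℂ) * u := by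
    rw [mul_add, hu1]; ring
  rw [← hL]
  apply mem_closure_of_tendsto h8
  filter_upwards [Ioo_mem_nhdsGT_of_mem (Set.left_mem_Ico.mpr one_pos)] with ε hε
  obtain ⟨hε0, hε1⟩ := hε
  set w : ℂ := 1 + (ε:ℂ)*u with hwdef
  have habsu : ‖u‖ = 1 := by
    rw [Complex.norm_def, Complex.normSq_apply, hure, huim]
    rw [show c*c + s*s = 1 by nlinarith]
    exact Real.sqrt_one
  have habseu : ‖(ε:ℂ)*u‖ = ε := by
    rw [norm_mul, Complex.norm_real, Real.norm_eq_abs, abs_of_pos hε0, habsu, mul_one]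
  have hw : w ≠ 0 := by
    intro h0
    have h1 : (1:ℂ) = w - (ε:ℂ)*u := by rw [hwdef]; ring
    have h2 : (1:ℝ) ≤ ‖w‖ + ε := by
      calc (1:ℝ) = ‖w - (ε:ℂ)*u‖ := by rw [← h1]; simp
        _ ≤ ‖w‖ + ‖(ε:ℂ)*u‖ := by
            rw [show w - (ε:ℂ)*u = w + -((ε:ℂ)*u) by ring]
            simpa using norm_add_le w (-((ε:ℂ)*u))
        _ = ‖w‖ + ε := by rw [habseu]
    rw [h0] at h2
    simp at h2
    linarith
  have hnsq : Complex.normSq w = q ε := by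
    have h1 : w.re = 1 + ε*c := by simp [hwdef, hure]
    have h2 : w.im = ε*s := by simp [hwdef, huim]
    rw [Complex.normSq_apply, h1, h2, hqdef]
    simp only
    nlinarith [hcs]
  have hq0' : (0:ℝ) ≤ q ε := hnsq ▸ Complex.normSq_nonneg w
  have habsw : (‖w‖) ^ (p-2) = q ε ^ ((p-2)/2) := by
    rw [Complex.norm_def, hnsq, Real.sqrt_eq_rpow, ← Real.rpow_mul hq0',
      show (1:ℝ)/2*(p-2) = (p-2)/2 by ring]
  have hgε : g ε = (starRingEnd ℂ) (Fp p w) := by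
    rw [Fp, if_neg hw, map_mul, Complex.conj_ofReal, hgdef]
    simp only
    rw [habsw]
    congr 1
    rw [hwdef]
    simp [map_add, map_mul, Complex.conj_ofReal]
  have hF1 : Fp p (1:ℂ) = 1 := by
    rw [Fp, if_neg one_ne_zero]
    simp [Real.one_rpow]
  have hg0 : g 0 = 1 := by
    rw [hgdef]
    simp [hq0, Real.one_rpow]
  have hslope_eq : u * slope g 0 ε
      = ((1/ε^2 : ℝ):ℂ) * ((w - 1) * (starRingEnd ℂ) (Fp p w - Fp p 1)) := by
    simp only [slope, vsub_eq_sub, sub_zero, Complex.real_smul]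
    push_cast
    rw [hF1, map_sub, ← hgε, map_one, hg0]
    rw [show w - 1 = (ε:ℂ)*u by rw [hwdef]; ring]
    have hεne : (ε:ℂ) ≠ 0 := by exact_mod_cast hε0.ne'
    field_simp
  rw [hslope_eq]
  exact S_smul p hp (1/ε^2) (by positivity) _ ⟨1, w, rfl⟩

lemma sector_sub_closure (p : ℝ) (hp : 1 < p) :
    Sector (Real.arcsin |1 - 2 / p|) ⊆
      closure {ζ : ℂ | ∃ z w : ℂ, ζ = (w - z) * (starRingEnd ℂ) (Fp p w - Fp p z)} := by
  have hp0 : (0:ℝ) < p := lt_trans one_pos hp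
  intro ζ hζmem
  by_cases hζ : ζ = 0
  · exact subset_closure ⟨0, 0, by simp [hζ]⟩
  have harg : |ζ.arg| ≤ Real.arcsin |1 - 2/p| := by
    rcases hζmem with h | h
    · exact absurd h hζ
    · exact h
  set G : ℝ → ℂ := fun θ =>
    (1 : ℂ) + (((p-2) * Real.cos θ : ℝ) : ℂ) * ((Real.cos θ : ℂ) + (Real.sin θ : ℂ)*Complex.I)
    with hGdef
  have hGmem : ∀ θ, G θ ∈ closure {ζ : ℂ | ∃ z w : ℂ,
      ζ = (w - z) * (starRingEnd ℂ) (Fp p w - Fp p z)} := fun θ => L_mem_closure p hp θ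
  have hGre : ∀ θ, (G θ).re = 1 + (p-2)*Real.cos θ^2 := by
    intro θ
    simp only [hGdef, Complex.add_re, Complex.mul_re, Complex.ofReal_re, Complex.ofReal_im,
      Complex.add_im, Complex.mul_im, Complex.I_re, Complex.I_im, Complex.one_re]
    ring
  have hGim : ∀ θ, (G θ).im = (p-2)*Real.cos θ*Real.sin θ := by
    intro θ
    simp only [hGdef, Complex.add_re, Complex.mul_re, Complex.ofReal_re, Complex.ofReal_im,
      Complex.add_im, Complex.mul_im, Complex.I_re, Complex.I_im, Complex.one_im]
    ring
  have hGrepos : ∀ θ, 0 < (G θ).re := by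
    intro θ
    rw [hGre]
    rcases le_total 2 p with h | h
    · nlinarith [sq_nonneg (Real.cos θ)]
    · nlinarith [Real.cos_sq_le_one θ]
  have hGne : ∀ θ, G θ ≠ 0 := by
    intro θ h0
    have := hGrepos θ
    rw [h0] at this
    simp at this
  have hGabs : ∀ θ, 0 < ‖G θ‖ := fun θ => norm_pos_iff.mpr (hGne θ)
  have hGcont : Continuous G := by
    rw [hGdef]
    continuity
  -- endpoint θ₀
  set θ₀ := Real.arccos ((Real.sqrt p)⁻¹) with hθ₀def
  have hsp : 1 ≤ Real.sqrt p := Real.one_le_sqrt.mpr hp.le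
  have hc₀ : Real.cos θ₀ = (Real.sqrt p)⁻¹ := by
    rw [hθ₀def]
    have h0 : (0:ℝ) ≤ (Real.sqrt p)⁻¹ := by positivity
    exact Real.cos_arccos (by linarith) (by
      rw [inv_le_one_iff₀]; right; exact hsp)
  have h1p : (0:ℝ) ≤ 1 - 1/p := by
    rw [sub_nonneg, div_le_one hp0]; linarith
  have hv2 : ((Real.sqrt p)⁻¹)^2 = 1/p := by
    rw [sq, ← mul_inv, Real.mul_self_sqrt hp0.le, one_div]
  have hs₀ : Real.sin θ₀ = Real.sqrt (1 - 1/p) := by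
    rw [hθ₀def, Real.sin_arccos]
    congr 1
    rw [hv2]
  have hs2 : (Real.sqrt (1 - 1/p))^2 = 1 - 1/p := Real.sq_sqrt h1p
  have hcs₀ : Real.cos θ₀ * Real.sin θ₀ = Real.sqrt (p-1)/p := by
    rw [hc₀, hs₀, ← Real.sqrt_inv, ← Real.sqrt_mul (by positivity)]
    have hpne : p ≠ 0 := ne_of_gt hp0
    have hpinv : p * p⁻¹ = 1 := mul_inv_cancel₀ hpne
    rw [show p⁻¹ * (1 - 1/p) = (p-1) * (1/p)^2 by
      field_simp]
    rw [Real.sqrt_mul (by linarith), Real.sqrt_sq (by positivity)]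
    ring
  have hnsq : Complex.normSq (G θ₀) = p - 1 := by
    rw [Complex.normSq_apply, hGre, hGim, hc₀, hs₀]
    have hpinv : p * p⁻¹ = 1 := mul_inv_cancel₀ (ne_of_gt hp0)
    linear_combination ((p-2)^2*(((Real.sqrt p)⁻¹)^2 + 1/p) + 2*(p-2) + (p-2)^2*(1-1/p)) * hv2
      + ((p-2)^2*((Real.sqrt p)⁻¹)^2) * hs2 + (p-2) * hpinv
  have habsG0 : ‖G θ₀‖ = Real.sqrt (p-1) := by
    rw [Complex.norm_def, hnsq]
  have hsq1 : (0:ℝ) < Real.sqrt (p-1) := Real.sqrt_pos.mpr (by linarith)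
  have hA₀ : (G θ₀).arg = Real.arcsin ((p-2)/p) := by
    rw [Complex.arg_of_re_nonneg (hGrepos θ₀).le, hGim, hc₀, hs₀]
    rw [show (p-2) * (Real.sqrt p)⁻¹ * Real.sqrt (1-1/p)
        = (p-2) * ((Real.sqrt p)⁻¹ * Real.sqrt (1-1/p)) by ring]
    rw [← hc₀, ← hs₀, hcs₀, habsG0]
    congr 1
    field_simp
  -- conjugate endpoint
  have hargsmall : |(G θ₀).arg| < Real.pi/2 :=
    Complex.abs_arg_lt_pi_div_two_iff.mpr (Or.inl (hGrepos θ₀))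
  have hGconj : G (-θ₀) = (starRingEnd ℂ) (G θ₀) := by
    rw [hGdef]
    simp only [Real.cos_neg, Real.sin_neg, map_add, map_mul, map_one, Complex.conj_ofReal,
      Complex.conj_I]
    push_cast
    ring
  have hargneg : (G (-θ₀)).arg = - (G θ₀).arg := by
    rw [hGconj, Complex.arg_conj, if_neg]
    intro h
    rw [h] at hargsmall
    rw [abs_of_pos Real.pi_pos] at hargsmall
    linarith [Real.pi_pos]
  set A₀ := (G θ₀).arg with hA₀def
  have hφA : |A₀| = Real.arcsin |1 - 2/p| := by
    have h12 : (1 : ℝ) - 2/p = (p-2)/p := by field_simp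
    rw [h12]
    rw [hA₀]
    rcases le_total 0 ((p-2)/p) with h | h
    · rw [_root_.abs_of_nonneg h, _root_.abs_of_nonneg (Real.arcsin_nonneg.mpr h)]
    · rw [_root_.abs_of_nonpos h, _root_.abs_of_nonpos (Real.arcsin_nonpos.mpr h), Real.arcsin_neg]
  have hfcont : ContinuousOn (fun θ => (G θ).arg) (Set.uIcc (-θ₀) θ₀) := by
    intro θ _
    exact ((Complex.continuousAt_arg (Complex.mem_slitPlane_iff.mpr
      (Or.inl (hGrepos θ)))).comp hGcont.continuousAt).continuousWithinAt
  have habs' : |ζ.arg| ≤ |A₀| := by rw [hφA]; exact harg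
  have hψ : ζ.arg ∈ Set.uIcc ((fun θ => (G θ).arg) (-θ₀)) ((fun θ => (G θ).arg) θ₀) := by
    simp only
    rw [hargneg, ← hA₀def, Set.mem_uIcc]
    rcases abs_cases A₀ with ⟨h1, h2⟩ | ⟨h1, h2⟩ <;>
      rcases abs_le.mp habs' with ⟨h3, h4⟩
    · left; constructor <;> linarith
    · right; constructor <;> linarith
  obtain ⟨θs, _, hθs⟩ := intermediate_value_uIcc hfcont hψ
  set r' := ‖ζ‖ / ‖G θs‖ with hr'def
  have hr' : 0 < r' := div_pos (norm_pos_iff.mpr hζ) (hGabs θs)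
  have hkey : ζ = ((r' : ℝ):ℂ) * G θs := by
    refine (Complex.ext_norm_arg ?_ ?_).symm
    · rw [norm_mul, Complex.norm_real, Real.norm_eq_abs, abs_of_pos hr', hr'def, div_mul_eq_mul_div,
        mul_div_assoc, div_self (ne_of_gt (hGabs θs)), mul_one]
    · rw [Complex.arg_real_mul _ hr']
      exact hθs
  rw [hkey]
  have hmem := hGmem θs
  have hcont : Continuous (fun y : ℂ => ((r':ℝ):ℂ)*y) := continuous_const.mul continuous_id
  have h1 : ((r':ℝ):ℂ)*G θs ∈ (fun y => ((r':ℝ):ℂ)*y) '' closure {ζ : ℂ | ∃ z w : ℂ,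
      ζ = (w - z) * (starRingEnd ℂ) (Fp p w - Fp p z)} := ⟨_, hmem, rfl⟩
  have h2 := image_closure_subset_closure_image hcont h1
  have himg : (fun y : ℂ => ((r':ℝ):ℂ)*y) '' {ζ : ℂ | ∃ z w : ℂ,
      ζ = (w - z) * (starRingEnd ℂ) (Fp p w - Fp p z)} ⊆ {ζ : ℂ | ∃ z w : ℂ,
      ζ = (w - z) * (starRingEnd ℂ) (Fp p w - Fp p z)} := by
    rintro x ⟨y, hy, rfl⟩
    exact S_smul p hp r' hr' y hy
  exact closure_mono himg h2

theorem closure_eq_sector (p : ℝ) (hp : 1 < p) :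
    closure {ζ : ℂ | ∃ z w : ℂ, ζ = (w - z) * (starRingEnd ℂ) (Fp p w - Fp p z)} =
      Sector (Real.arcsin |1 - 2 / p|) := by
  apply Set.Subset.antisymm
  · apply closure_minimal
    · rintro ζ ⟨z, w, rfl⟩
      exact (mem_sector_iff p hp _).mpr (sector_bound p hp z w)
    · have h : Sector (Real.arcsin |1 - 2 / p|)
          = {ζ : ℂ | 2*Real.sqrt (p-1) * ‖ζ‖ ≤ p * ζ.re} :=
        Set.ext (fun ζ => mem_sector_iff p hp ζ)
      rw [h]
      exact isClosed_le (continuous_const.mul continuous_norm)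
        (continuous_const.mul Complex.continuous_re)
  · exact sector_sub_closure p hp
end

section
/- Let A be a real symmetric 2×2 matrix with eigenvalues 1 and λ > 0. Then, identifying ℝ² with ℂ, the set {⟨h, A h⟩_ℂ : h ∈ ℂ} (where ⟨h, Ah⟩_ℂ := h · conj(Ah) computed via the identification) equals the sector Σ(arcsin(|λ - 1|/(λ + 1))). -/
/-- Identification of `ℝ²` (as `Fin 2 → ℝ`) with `ℂ`. -/
noncomputable def toC (v : Fin 2 → ℝ) : ℂ := Complex.mk (v 0) (v 1)

def toV (h : ℂ) : Fin 2 → ℝ := ![h.re, h.im]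

open Complex Real

lemma arg_le_of_im_aux (z : ℂ) (k : ℝ) (hre : 0 < z.re)
    (h : |z.im| ≤ k * ‖z‖) : |z.arg| ≤ Real.arcsin k := by
  have hz : z ≠ 0 := fun h0 => by simp [h0] at hre
  have habs : 0 < ‖z‖ := norm_pos_iff.mpr hz
  have h2 : |z.arg| < π/2 := Complex.abs_arg_lt_pi_div_two_iff.mpr (Or.inl hre)
  have h2' := abs_lt.mp h2
  have hsin : |Real.sin z.arg| ≤ k := by
    rw [Complex.sin_arg, abs_div, abs_of_pos habs, div_le_iff₀ habs]
    simpa [mul_comm] using h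
  have heq : |z.arg| = Real.arcsin (Real.sin |z.arg|) := by
    rw [Real.arcsin_sin (by linarith [abs_nonneg z.arg, Real.pi_pos]) (le_of_lt h2)]
  rw [heq]
  apply Real.monotone_arcsin
  rcases abs_cases z.arg with ⟨he, _⟩ | ⟨he, hneg⟩
  · rw [he]; exact (abs_le.mp hsin).2
  · rw [he, Real.sin_neg]; linarith [(abs_le.mp hsin).1]

lemma sector_aux (s t : ℝ) (m : ℂ) (ht0 : 0 ≤ t) (hts : t < s)
    (hmabs : ‖m‖ = t) :
    {ζ : ℂ | ∃ h : ℂ, ζ = (s : ℂ) * (h * (starRingEnd ℂ) h) + m * h ^ 2} =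
      Sector (Real.arcsin (t / s)) := by
  have hs0 : 0 < s := lt_of_le_of_lt ht0 hts
  have hnm : Complex.normSq m = t ^ 2 := by
    rw [← Complex.sq_norm, hmabs]
  have hsinφ : Real.sin (Real.arcsin (t / s)) = t / s :=
    Real.sin_arcsin (by have := div_nonneg ht0 hs0.le; linarith)
      (by rw [div_le_one hs0]; linarith)
  have hφlt : Real.arcsin (t / s) < π / 2 :=
    Real.arcsin_lt_pi_div_two.mpr (by rw [div_lt_one hs0]; exact hts)
  ext z
  simp only [Set.mem_setOf_eq, Sector]
  constructor
  · rintro ⟨h, rfl⟩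
    by_cases hh : h = 0
    · left; simp [hh]
    right
    rw [Complex.mul_conj]
    obtain ⟨R, hR⟩ : ∃ R : ℝ, Complex.normSq h = R := ⟨_, rfl⟩
    obtain ⟨v, hv⟩ : ∃ v : ℂ, m * h ^ 2 = v := ⟨_, rfl⟩
    rw [hR, hv]
    have hR0 : 0 < R := hR ▸ Complex.normSq_pos.mpr hh
    have hv2 : v.re ^ 2 + v.im ^ 2 = t ^ 2 * R ^ 2 := by
      have h1 : Complex.normSq v = t ^ 2 * R ^ 2 := by
        rw [← hv, map_mul, map_pow, hnm, hR]
      rw [← h1, Complex.normSq_apply]; ring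
    obtain ⟨w, hw⟩ : ∃ w : ℂ, (s : ℂ) * (R : ℂ) + v = w := ⟨_, rfl⟩
    rw [hw]
    have hwre : w.re = s * R + v.re := by rw [← hw]; simp
    have hwim : w.im = v.im := by rw [← hw]; simp
    have hre : 0 < w.re := by
      rw [hwre]
      rcases eq_or_lt_of_le ht0 with ht0' | ht0'
      · have h0 : v.re ^ 2 + v.im ^ 2 = 0 := by rw [hv2, ← ht0']; ring
        have hx : v.re = 0 := by nlinarith [sq_nonneg v.re, sq_nonneg v.im]
        rw [hx, add_zero]; exact mul_pos hs0 hR0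
      · nlinarith [hv2, sq_nonneg (v.re + t * R), mul_pos (sub_pos.mpr hts) hR0,
          mul_pos ht0' hR0, sq_nonneg v.im]
    refine arg_le_of_im_aux w (t / s) hre ?_
    have habs2 : ‖w‖ ^ 2 = (s * R + v.re) ^ 2 + v.im ^ 2 := by
      rw [Complex.sq_norm, Complex.normSq_apply, hwre, hwim]; ring
    have hkey2 : (s * |w.im|) ^ 2 ≤ (t * ‖w‖) ^ 2 := by
      rw [mul_pow, mul_pow, _root_.sq_abs, habs2, hwim]
      nlinarith [sq_nonneg (s * v.re + t ^ 2 * R), hv2]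
    have h1 : s * |w.im| ≤ t * ‖w‖ := by
      have h3 := Real.sqrt_le_sqrt hkey2
      rwa [Real.sqrt_sq (by positivity), Real.sqrt_sq (by positivity)] at h3
    rw [div_mul_eq_mul_div, le_div_iff₀ hs0]
    linarith
  · intro hz
    by_cases hz0 : z = 0
    · exact ⟨0, by rw [hz0]; simp⟩
    rcases hz with rfl | harg
    · exact absurd rfl hz0
    obtain ⟨α, hα⟩ : ∃ α : ℝ, z.arg = α := ⟨_, rfl⟩
    rw [hα] at harg
    have hαlt : |α| < π / 2 := lt_of_le_of_lt harg hφlt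
    have hcos : 0 < Real.cos α :=
      Real.cos_pos_of_mem_Ioo ⟨by linarith [(abs_lt.mp hαlt).1], (abs_lt.mp hαlt).2⟩
    have hsina : s * |Real.sin α| ≤ t := by
      have hmem1 : |α| ∈ Set.Icc (-(π/2)) (π/2) :=
        ⟨by linarith [abs_nonneg α, Real.pi_pos], hαlt.le⟩
      have hmem2 : Real.arcsin (t/s) ∈ Set.Icc (-(π/2)) (π/2) :=
        ⟨Real.neg_pi_div_two_le_arcsin _, Real.arcsin_le_pi_div_two _⟩
      have hmono := Real.strictMonoOn_sin.monotoneOn hmem1 hmem2 harg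
      rw [hsinφ] at hmono
      have habs : |Real.sin α| = Real.sin |α| := by
        rcases abs_cases α with ⟨he, hge⟩ | ⟨he, hneg⟩
        · rw [he]
          exact _root_.abs_of_nonneg (Real.sin_nonneg_of_mem_Icc
            ⟨hge, by rw [← he]; linarith [hαlt.le, Real.pi_pos]⟩)
        · rw [he, Real.sin_neg]
          exact _root_.abs_of_nonpos (Real.sin_nonpos_of_nonpos_of_neg_pi_le hneg.le
            (by rw [← neg_le, ← he]; linarith [hαlt.le, Real.pi_pos]))
      rw [habs]
      calc s * Real.sin |α| ≤ s * (t / s) := mul_le_mul_of_nonneg_left hmono hs0.le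
        _ = t := by field_simp
    have hD : 0 ≤ t ^ 2 - s ^ 2 * Real.sin α ^ 2 := by
      nlinarith [hsina, mul_nonneg hs0.le (abs_nonneg (Real.sin α)),
        _root_.sq_abs (Real.sin α)]
    obtain ⟨D, hDdef⟩ : ∃ D : ℝ, t ^ 2 - s ^ 2 * Real.sin α ^ 2 = D := ⟨_, rfl⟩
    rw [hDdef] at hD
    obtain ⟨r, hr⟩ : ∃ r : ℝ, s * Real.cos α + Real.sqrt D = r := ⟨_, rfl⟩
    have hr0 : 0 < r := by
      rw [← hr]
      have := Real.sqrt_nonneg D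
      have := mul_pos hs0 hcos
      linarith
    obtain ⟨w, hw⟩ : ∃ w : ℂ, (r : ℂ) * Complex.exp (α * Complex.I) = w := ⟨_, rfl⟩
    have hwre : w.re = r * Real.cos α := by
      rw [← hw]; simp [Complex.exp_ofReal_mul_I_re, Complex.exp_ofReal_mul_I_im]
    have hwim : w.im = r * Real.sin α := by
      rw [← hw]; simp [Complex.exp_ofReal_mul_I_re, Complex.exp_ofReal_mul_I_im]
    have hwnorm : Complex.normSq (w - (s : ℂ)) = t ^ 2 := by
      rw [Complex.normSq_apply]
      simp only [Complex.sub_re, Complex.sub_im, hwre, hwim, Complex.ofReal_re,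
        Complex.ofReal_im, sub_zero]
      have hsq : Real.sqrt D ^ 2 = D := Real.sq_sqrt hD
      have hsc := Real.sin_sq_add_cos_sq α
      have ht2 : t ^ 2 = D + s ^ 2 * Real.sin α ^ 2 := by linarith
      rw [ht2, ← hr]
      linear_combination (2*s*Real.cos α*Real.sqrt D + Real.sqrt D^2 - s^2
        + s^2*Real.cos α^2) * hsc + hsq
    obtain ⟨u, hmu, habsu⟩ : ∃ u : ℂ, m * u = w - (s : ℂ) ∧ ‖u‖ = 1 := by
      by_cases hm0 : m = 0
      · refine ⟨1, ?_, by simp⟩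
        have h0 : Complex.normSq (w - (s:ℂ)) = 0 := by
          rw [hwnorm, ← hnm, hm0]; simp
        rw [Complex.normSq_eq_zero] at h0
        rw [h0, hm0]; simp
      · refine ⟨(w - (s:ℂ)) / m, mul_div_cancel₀ _ hm0, ?_⟩
        rw [norm_div, hmabs]
        have ht0' : t ≠ 0 := fun h0 => hm0 (Complex.normSq_eq_zero.mp (by rw [hnm, h0]; ring))
        have habsw : ‖w - (s:ℂ)‖ = t := by
          rw [Complex.norm_def, hwnorm, Real.sqrt_sq ht0]
        rw [habsw, div_self ht0']
    obtain ⟨ρ, hρdef⟩ : ∃ ρ : ℝ, Real.sqrt (‖z‖ / r) = ρ := ⟨_, rfl⟩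
    have hρ0 : 0 ≤ ρ := hρdef ▸ Real.sqrt_nonneg _
    have hρ2 : ρ ^ 2 = ‖z‖ / r := by
      rw [← hρdef]; exact Real.sq_sqrt (by positivity)
    refine ⟨(ρ : ℂ) * Complex.exp ((u.arg / 2 : ℝ) * Complex.I), ?_⟩
    obtain ⟨h, hh⟩ : ∃ h : ℂ, (ρ : ℂ) * Complex.exp ((u.arg / 2 : ℝ) * Complex.I) = h :=
      ⟨_, rfl⟩
    rw [hh]
    have hconj : h * (starRingEnd ℂ) h = ((‖z‖ / r : ℝ) : ℂ) := by
      rw [Complex.mul_conj]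
      congr 1
      rw [← hρ2, ← Complex.sq_norm, ← hh, norm_mul, Complex.norm_exp_ofReal_mul_I,
        Complex.norm_real, Real.norm_eq_abs, _root_.abs_of_nonneg hρ0]
      ring
    have hexp : Complex.exp ((u.arg : ℝ) * Complex.I) = u := by
      have h4 := Complex.norm_mul_exp_arg_mul_I u
      rwa [habsu, Complex.ofReal_one, one_mul] at h4
    have hh2 : h ^ 2 = ((‖z‖ / r : ℝ) : ℂ) * u := by
      rw [← hh, mul_pow, ← Complex.exp_nat_mul]
      have h5 : ((2:ℕ) : ℂ) * ((u.arg / 2 : ℝ) * Complex.I) = (u.arg : ℝ) * Complex.I := by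
        push_cast; ring
      rw [h5, hexp, ← hρ2]
      push_cast
      ring
    rw [hconj, hh2]
    have h6 : (s : ℂ) * ((‖z‖ / r : ℝ) : ℂ) + m * (((‖z‖ / r : ℝ) : ℂ) * u) =
        ((‖z‖ / r : ℝ) : ℂ) * ((s : ℂ) + m * u) := by ring
    rw [h6, hmu, show (s : ℂ) + (w - (s:ℂ)) = w by ring, ← hw]
    have hrne : (r : ℂ) ≠ 0 := by exact_mod_cast hr0.ne'
    have h7 : ((‖z‖ / r : ℝ) : ℂ) * ((r:ℂ) * Complex.exp ((α:ℝ) * Complex.I)) =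
        ((‖z‖ : ℝ) : ℂ) * Complex.exp ((α:ℝ) * Complex.I) := by
      rw [Complex.ofReal_div]
      field_simp
    rw [h7, ← hα]
    exact (Complex.norm_mul_exp_arg_mul_I z).symm

theorem numerical_range_symmetric_matrix (A : Matrix (Fin 2) (Fin 2) ℝ) (lam : ℝ)
    (hlam : 0 < lam) (hsymm : A.IsSymm)
    (htr : A.trace = 1 + lam) (hdet : A.det = lam) :
    {ζ : ℂ | ∃ h : ℂ, ζ = h * (starRingEnd ℂ) (toC (A.mulVec (toV h)))} =
      Sector (Real.arcsin (|lam - 1| / (lam + 1))) := by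
  have hb : A 1 0 = A 0 1 := hsymm.apply 0 1
  rw [Matrix.trace_fin_two] at htr
  rw [Matrix.det_fin_two, hb] at hdet
  set a := A 0 0 with ha
  set b := A 0 1 with hbdef
  set c := A 1 1 with hc
  have key : ∀ h : ℂ, h * (starRingEnd ℂ) (toC (A.mulVec (toV h))) =
      (((1 + lam)/2 : ℝ) : ℂ) * (h * (starRingEnd ℂ) h) +
        Complex.mk ((a - c)/2) (-b) * h ^ 2 := by
    intro h
    apply Complex.ext <;>
      simp [toC, toV, Matrix.mulVec, dotProduct, Fin.sum_univ_two, hb,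
        pow_two, Complex.mul_re, Complex.mul_im] <;>
      ring_nf
    · linear_combination ((h.re^2 + h.im^2)/2) * htr
    · rw [← ha, ← hbdef, ← hc]; ring
  have hset : {ζ : ℂ | ∃ h : ℂ, ζ = h * (starRingEnd ℂ) (toC (A.mulVec (toV h)))} =
      {ζ : ℂ | ∃ h : ℂ, ζ = (((1 + lam)/2 : ℝ) : ℂ) * (h * (starRingEnd ℂ) h) +
        Complex.mk ((a - c)/2) (-b) * h ^ 2} := by
    ext ζ; constructor <;> rintro ⟨h, rfl⟩ <;> exact ⟨h, by rw [key]⟩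
  rw [hset]
  have ht0 : (0:ℝ) ≤ |lam - 1|/2 := by positivity
  have hts : |lam - 1|/2 < (1 + lam)/2 := by
    rcases abs_cases (lam - 1) with ⟨he, _⟩ | ⟨he, _⟩ <;> rw [he] <;> linarith
  have hmabs : ‖Complex.mk ((a - c)/2) (-b)‖ = |lam - 1|/2 := by
    have h1 : Complex.normSq (Complex.mk ((a - c)/2) (-b)) = (|lam - 1|/2) ^ 2 := by
      have h2 : (|lam - 1|/2 : ℝ) ^ 2 = (lam - 1)^2 / 4 := by
        rw [div_pow, _root_.sq_abs]; norm_num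
      rw [h2, Complex.normSq_mk]
      linear_combination ((a + c + 1 + lam)/4) * htr - hdet
    rw [Complex.norm_def, h1, Real.sqrt_sq ht0]
  have hratio : |lam - 1| / (lam + 1) = (|lam - 1|/2) / ((1 + lam)/2) := by
    rw [div_eq_div_iff (by linarith) (by linarith)]
    ring
  rw [hratio]
  exact sector_aux _ _ _ ht0 hts hmabs
end

section
/- Let A = diag(1, λ) with λ > 0, and for x ∈ ℝ let h = (1, x) viewed as the complex number 1 + ix. Then sin(arg(h · conj(Ah))) = sin(arctan x + arctan(λ x)) · (1 - λ)/(1 + λ). -/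
theorem sin_arg_formula (lam : ℝ) (hlam : 0 < lam) (x : ℝ) :
    Real.sin (((1 + x * Complex.I) * (starRingEnd ℂ) (1 + (lam * x) * Complex.I)).arg) =
      Real.sin (Real.arctan x + Real.arctan (lam * x)) * (1 - lam) / (1 + lam) := by
  have h1 : (0:ℝ) < 1 + x^2 := by positivity
  have h2 : (0:ℝ) < 1 + (lam*x)^2 := by positivity
  have ha : ‖(1 + x * Complex.I : ℂ)‖ = Real.sqrt (1 + x^2) := by
    rw [show (1 + x * Complex.I) = Complex.mk 1 x by simp [Complex.mk_eq_add_mul_I]]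
    rw [Complex.norm_def, Complex.normSq_mk]; ring_nf
  have hb : ‖(1 + (lam*x) * Complex.I : ℂ)‖ = Real.sqrt (1 + (lam*x)^2) := by
    rw [show (1 + (lam*x) * Complex.I) = Complex.mk 1 (lam*x) by simp [Complex.mk_eq_add_mul_I]]
    rw [Complex.norm_def, Complex.normSq_mk]; ring_nf
  rw [Complex.sin_arg, Real.sin_add, Real.sin_arctan, Real.cos_arctan, Real.sin_arctan,
    Real.cos_arctan, norm_mul, Complex.norm_conj, ha, hb]
  have him : ((1 + x * Complex.I) * (starRingEnd ℂ) (1 + (lam * x) * Complex.I)).im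
      = x - lam * x := by simp [Complex.ext_iff]; ring
  rw [him]
  have s1 : Real.sqrt (1 + x^2) > 0 := Real.sqrt_pos.mpr h1
  have s2 : Real.sqrt (1 + (lam*x)^2) > 0 := Real.sqrt_pos.mpr h2
  field_simp
end

section
/- For p ∈ (1, ∞), for all λ, w, z ∈ ℂ with |λ| = 1, the product (λw − z)·conj(λ F_p(w) − F_p(z)) lies in the sector Σ_p. -/
open Complex

lemma aux1 (u : ℝ) (hu : 0 ≤ u) : Real.sinh u ≤ u * Real.cosh u := by
  have hmono : MonotoneOn (fun t : ℝ => t * Real.cosh t - Real.sinh t) (Set.Ici 0) := by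
    have hd : ∀ t : ℝ, HasDerivAt (fun t : ℝ => t * Real.cosh t - Real.sinh t)
        (t * Real.sinh t) t := by
      intro t
      have h1 := ((hasDerivAt_id t).mul (Real.hasDerivAt_cosh t)).sub (Real.hasDerivAt_sinh t)
      refine h1.congr_deriv ?_
      simp [id]
    apply monotoneOn_of_deriv_nonneg (convex_Ici 0)
    · exact (Continuous.continuousOn (by continuity))
    · intro t ht
      exact (hd t).differentiableAt.differentiableWithinAt
    · intro t ht
      rw [interior_Ici] at ht
      rw [(hd t).deriv]
      exact mul_nonneg (le_of_lt ht) (Real.sinh_nonneg_iff.2 (le_of_lt ht))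
  have := hmono (Set.self_mem_Ici) (Set.mem_Ici.2 hu) hu
  simp at this
  linarith

lemma aux2 (u v : ℝ) (hu : 0 ≤ u) (huv : u ≤ v) : v * Real.sinh u ≤ u * Real.sinh v := by
  have hmono : MonotoneOn (fun t : ℝ => u * Real.sinh t - t * Real.sinh u) (Set.Ici u) := by
    have hd : ∀ t : ℝ, HasDerivAt (fun t : ℝ => u * Real.sinh t - t * Real.sinh u)
        (u * Real.cosh t - Real.sinh u) t := by
      intro t
      have h1 := ((Real.hasDerivAt_sinh t).const_mul u).sub ((hasDerivAt_id t).mul_const (Real.sinh u))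
      refine h1.congr_deriv ?_
      simp [id]
    apply monotoneOn_of_deriv_nonneg (convex_Ici u)
    · exact (Continuous.continuousOn (by continuity))
    · intro t ht
      exact (hd t).differentiableAt.differentiableWithinAt
    · intro t ht
      rw [interior_Ici] at ht
      rw [(hd t).deriv]
      have h1 : Real.cosh u ≤ Real.cosh t := by
        rw [Real.cosh_le_cosh]
        rw [_root_.abs_of_nonneg hu, _root_.abs_of_nonneg (hu.trans (le_of_lt ht))]
        exact le_of_lt ht
      have h2 := aux1 u hu
      nlinarith [mul_le_mul_of_nonneg_left h1 hu]
  have := hmono (Set.self_mem_Ici) (Set.mem_Ici.2 huv) huv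
  simp at this
  linarith


lemma key_cosh (a : ℝ) (ha : -1 < a) (y : ℝ) :
    4*(a+1)*(Real.cosh (a*y) - 1) ≤ a^2*(Real.cosh ((a+2)*y) - Real.cosh (a*y)) := by
  -- the function g
  have main : ∀ y : ℝ, 0 ≤ y →
      4*(a+1)*(Real.cosh (a*y) - 1) ≤ a^2*(Real.cosh ((a+2)*y) - Real.cosh (a*y)) := by
    intro y hy
    set g : ℝ → ℝ := fun t => a^2 * Real.cosh ((a+2)*t) - (a+2)^2 * Real.cosh (a*t) with hg
    have hd : ∀ t : ℝ, HasDerivAt g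
        (a^2*(a+2)*Real.sinh ((a+2)*t) - (a+2)^2*a*Real.sinh (a*t)) t := by
      intro t
      have h1 : HasDerivAt (fun t : ℝ => (a+2)*t) (a+2) t := by
        simpa using (hasDerivAt_id t).const_mul (a+2)
      have h2 : HasDerivAt (fun t : ℝ => a*t) a t := by
        simpa using (hasDerivAt_id t).const_mul a
      have h3 := (((Real.hasDerivAt_cosh _).comp t h1).const_mul (a^2)).sub
        (((Real.hasDerivAt_cosh _).comp t h2).const_mul ((a+2)^2))
      refine h3.congr_deriv ?_
      ring
    have hmono : MonotoneOn g (Set.Ici 0) := by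
      apply monotoneOn_of_deriv_nonneg (convex_Ici 0)
      · exact (Continuous.continuousOn (by continuity))
      · intro t ht
        exact (hd t).differentiableAt.differentiableWithinAt
      · intro t ht
        rw [interior_Ici] at ht
        rw [(hd t).deriv]
        have ht0 : (0:ℝ) < t := ht
        rcases le_or_gt 0 a with h0 | h0
        · have H := aux2 (a*t) ((a+2)*t) (mul_nonneg h0 ht0.le)
            (by nlinarith)
          nlinarith [mul_nonneg (mul_nonneg h0 (by linarith : (0:ℝ) ≤ a+2))
            (sub_nonneg.2 H), ht0]
        · -- -1 < a < 0
          have hb : (0:ℝ) < -a := by linarith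
          have hsn : Real.sinh (a*t) = -Real.sinh ((-a)*t) := by
            rw [show a*t = -((-a)*t) by ring, Real.sinh_neg]
          rw [hsn]
          have H := aux2 ((-a)*t) ((a+2)*t) (mul_nonneg hb.le ht0.le)
            (by nlinarith)
          nlinarith [mul_nonneg (mul_nonneg hb.le (by linarith : (0:ℝ) ≤ a+2))
            (sub_nonneg.2 H), ht0]
    have h0y := hmono Set.self_mem_Ici (Set.mem_Ici.2 hy) hy
    simp only [hg, mul_zero, Real.cosh_zero] at h0y
    nlinarith [h0y]
  rcases le_or_gt 0 y with hy | hy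
  · exact main y hy
  · have := main (-y) (by linarith)
    rw [show a*(-y) = -(a*y) by ring, show (a+2)*(-y) = -((a+2)*y) by ring,
      Real.cosh_neg, Real.cosh_neg] at this
    exact this


lemma norm_key (c : ℝ) (hc : -1 < c) (d : ℝ) :
    4*(c+1)*(Real.exp d)^2*(Real.exp (d*c) - 1)^2 ≤
      c^2*(((Real.exp d)^2*Real.exp (d*c) + 1)^2 - (Real.exp d)^2*(Real.exp (d*c) + 1)^2) := by
  have hVpos : (0:ℝ) < Real.exp d := Real.exp_pos d
  have hZpos : (0:ℝ) < Real.exp (d*c) := Real.exp_pos _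
  set V := Real.exp d with hV
  set Z := Real.exp (d*c) with hZ
  have hE : Real.exp ((c+2)*d) = Z*(V*V) := by
    rw [show (c+2)*d = d*c + (d+d) by ring, Real.exp_add, Real.exp_add]
  have hC1 : Real.cosh (c*d) = (Z + Z⁻¹)/2 := by
    rw [Real.cosh_eq, Real.exp_neg, mul_comm c d]
  have hC2 : Real.cosh ((c+2)*d) = (Z*(V*V) + (Z*(V*V))⁻¹)/2 := by
    rw [Real.cosh_eq, Real.exp_neg, hE]
  have key0 := key_cosh c hc d
  rw [hC1, hC2] at key0
  have key2 := mul_le_mul_of_nonneg_left key0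
    (by positivity : (0:ℝ) ≤ 2*(Z*V^2))
  calc 4*(c+1)*V^2*(Z - 1)^2
      = 2*(Z*V^2)*(4*(c+1)*((Z + Z⁻¹)/2 - 1)) := by
        field_simp
        ring
    _ ≤ 2*(Z*V^2)*(c^2*((Z*(V*V) + (Z*(V*V))⁻¹)/2 - (Z + Z⁻¹)/2)) := key2
    _ = c^2*((V^2*Z + 1)^2 - V^2*(Z + 1)^2) := by
        field_simp
        ring

lemma L5 (p α β : ℝ) (hp : 1 < p) (hα : 0 < α) (hβ : 0 < β) :
    4*(p-1)*(α*β)^2*(α^(p-2) - β^(p-2))^2 ≤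
      (p-2)^2*((α^2*α^(p-2) + β^2*β^(p-2))^2 - (α*β)^2*(α^(p-2) + β^(p-2))^2) := by
  set c := p - 2 with hcdef
  have hc : -1 < c := by rw [hcdef]; linarith
  have hnorm : ∀ t : ℝ, 0 < t →
      4*(p-1)*t^2*(t^c - 1)^2 ≤ c^2*((t^2*t^c + 1)^2 - t^2*(t^c + 1)^2) := by
    intro t ht
    obtain ⟨d, rfl⟩ : ∃ d, t = Real.exp d := ⟨Real.log t, (Real.exp_log ht).symm⟩
    have h2 : (Real.exp d)^c = Real.exp (d*c) := by
      rw [Real.rpow_def_of_pos (Real.exp_pos d), Real.log_exp]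
    have hpc : p - 1 = c + 1 := by rw [hcdef]; ring
    rw [h2, hpc]
    exact norm_key c hc d
  have ht : (0:ℝ) < α/β := div_pos hα hβ
  set s := α/β with hs
  have hα' : α = s*β := by rw [hs]; field_simp
  have hn := hnorm s ht
  rw [hα', Real.mul_rpow ht.le hβ.le]
  calc 4*(p-1)*(s*β*β)^2*(s^c*β^c - β^c)^2
      = (β^2*β^c)^2 * (4*(p-1)*s^2*(s^c - 1)^2) := by ring
    _ ≤ (β^2*β^c)^2 * (c^2*((s^2*s^c + 1)^2 - s^2*(s^c + 1)^2)) :=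
        mul_le_mul_of_nonneg_left hn (by positivity)
    _ = c^2*(((s*β)^2*(s^c*β^c) + β^2*β^c)^2 - (s*β*β)^2*(s^c*β^c + β^c)^2) := by ring

lemma step2 (q c X Y P B E D : ℝ) (hq : 0 ≤ q) (hXY : X^2 + Y^2 = P^2)
    (h5 : 4*q*P^2*D^2 ≤ c^2*(B^2 - P^2*E^2)) :
    4*q*(Y*D)^2 ≤ c^2*(B - X*E)^2 := by
  have hY2 : Y^2 = P^2 - X^2 := by linarith
  have h1 : 4*q*(Y*D)^2 = 4*q*(P^2 - X^2)*D^2 := by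
    linear_combination (4*q*D^2) * hY2
  rw [h1]
  have hWnn : 0 ≤ c^2*E^2 + 4*q*D^2 := by
    have := mul_nonneg (mul_nonneg (by linarith : (0:ℝ) ≤ 4) hq) (sq_nonneg D)
    nlinarith [sq_nonneg (c*E)]
  have key : (c^2*E^2 + 4*q*D^2) * (c^2*(B - X*E)^2 - 4*q*(P^2 - X^2)*D^2) =
      ((c^2*E^2 + 4*q*D^2)*X - c^2*B*E)^2
        + 4*q*D^2*(c^2*(B^2 - P^2*E^2) - 4*q*P^2*D^2) := by ring
  rcases hWnn.eq_or_lt with h0 | hpos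
  · have hD0 : 4*q*D^2 = 0 := by nlinarith [sq_nonneg (c*E), mul_nonneg (mul_nonneg (by linarith : (0:ℝ) ≤ 4) hq) (sq_nonneg D)]
    calc 4*q*(P^2 - X^2)*D^2 = (4*q*D^2)*(P^2-X^2) := by ring
      _ = 0 := by rw [hD0]; ring
      _ ≤ c^2*(B - X*E)^2 := by positivity
  · have t1 : 0 ≤ c^2*(B^2 - P^2*E^2) - 4*q*P^2*D^2 := by linarith
    have h2 : 0 ≤ (c^2*E^2 + 4*q*D^2) * (c^2*(B - X*E)^2 - 4*q*(P^2 - X^2)*D^2) := by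
      rw [key]
      have := mul_nonneg (mul_nonneg (mul_nonneg (by linarith : (0:ℝ) ≤ 4) hq) (sq_nonneg D)) t1
      nlinarith [sq_nonneg ((c^2*E^2 + 4*q*D^2)*X - c^2*B*E)]
    nlinarith [h2, hpos]


lemma Fp_eq (p : ℝ) (z : ℂ) : Fp p z = z * ((‖z‖ ^ (p - 2) : ℝ) : ℂ) := by
  unfold Fp
  split
  · simp [*]
  · rfl

lemma rpow_step (p t : ℝ) (hp : 1 < p) (ht : 0 ≤ t) : t * t^(p-2) = t^(p-1) := by
  rcases ht.eq_or_lt with h | h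
  · rw [← h, Real.zero_rpow (by linarith : p - 1 ≠ 0), zero_mul]
  · rw [show p - 1 = 1 + (p-2) by ring, Real.rpow_add h, Real.rpow_one]

lemma main_bounds (p : ℝ) (hp : 1 < p) (a b : ℂ) :
    0 ≤ ((a - b) * (starRingEnd ℂ) (Fp p a - Fp p b)).re ∧
      4*(p-1)*((a - b) * (starRingEnd ℂ) (Fp p a - Fp p b)).im^2
        ≤ (p-2)^2*((a - b) * (starRingEnd ℂ) (Fp p a - Fp p b)).re^2 := by
  have ha2 : (‖a‖)^2 = a.re*a.re + a.im*a.im := by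
    rw [Complex.sq_norm, Complex.normSq_apply]
  have hb2 : (‖b‖)^2 = b.re*b.re + b.im*b.im := by
    rw [Complex.sq_norm, Complex.normSq_apply]
  have hre : ((a - b) * (starRingEnd ℂ) (Fp p a - Fp p b)).re
      = (‖a‖)^2*(‖a‖)^(p-2) + (‖b‖)^2*(‖b‖)^(p-2)
        - (a * (starRingEnd ℂ) b).re * ((‖a‖)^(p-2) + (‖b‖)^(p-2)) := by
    rw [Fp_eq, Fp_eq, ha2, hb2]
    simp only [map_sub, map_mul, Complex.conj_ofReal, Complex.mul_re, Complex.mul_im,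
      Complex.sub_re, Complex.sub_im, Complex.conj_re, Complex.conj_im,
      Complex.ofReal_re, Complex.ofReal_im]
    ring
  have him : ((a - b) * (starRingEnd ℂ) (Fp p a - Fp p b)).im
      = (a * (starRingEnd ℂ) b).im * ((‖a‖)^(p-2) - (‖b‖)^(p-2)) := by
    rw [Fp_eq, Fp_eq]
    simp only [map_sub, map_mul, Complex.conj_ofReal, Complex.mul_re, Complex.mul_im,
      Complex.sub_re, Complex.sub_im, Complex.conj_re, Complex.conj_im,
      Complex.ofReal_re, Complex.ofReal_im]
    ring
  have hXle : (a * (starRingEnd ℂ) b).re ≤ ‖a‖ * ‖b‖ := by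
    refine le_trans (Complex.re_le_norm _) (le_of_eq ?_)
    rw [norm_mul, Complex.norm_conj]
  have hAnn : 0 ≤ (‖a‖)^(p-2) := Real.rpow_nonneg (norm_nonneg a) _
  have hBnn : 0 ≤ (‖b‖)^(p-2) := Real.rpow_nonneg (norm_nonneg b) _
  have hRe : 0 ≤ ((a - b) * (starRingEnd ℂ) (Fp p a - Fp p b)).re := by
    rw [hre]
    have hmon : 0 ≤ (‖a‖ - ‖b‖)
        * (‖a‖ * (‖a‖)^(p-2) - ‖b‖ * (‖b‖)^(p-2)) := by
      rw [rpow_step p _ hp (norm_nonneg a), rpow_step p _ hp (norm_nonneg b)]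
      rcases le_total (‖a‖) (‖b‖) with h | h
      · have h1 : ‖a‖ - ‖b‖ ≤ 0 := by linarith
        have h2 := sub_nonpos.2 (Real.rpow_le_rpow (norm_nonneg a) h (by linarith : (0:ℝ) ≤ p - 1))
        nlinarith [mul_nonneg (neg_nonneg.2 h1) (neg_nonneg.2 h2)]
      · apply mul_nonneg
        · linarith
        · exact sub_nonneg.2 (Real.rpow_le_rpow (norm_nonneg b) h (by linarith))
    nlinarith [mul_le_mul_of_nonneg_right hXle (add_nonneg hAnn hBnn)]
  refine ⟨hRe, ?_⟩
  by_cases h0 : a = 0 ∨ b = 0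
  · have hY0 : (a * (starRingEnd ℂ) b).im = 0 := by
      rcases h0 with h | h <;> simp [h]
    rw [him, hY0]
    have : (0:ℝ) * ((‖a‖)^(p-2) - (‖b‖)^(p-2)) = 0 := by ring
    rw [this]
    nlinarith [sq_nonneg ((p-2) * (((a - b) * (starRingEnd ℂ) (Fp p a - Fp p b)).re))]
  · push_neg at h0
    have hαpos : 0 < ‖a‖ := norm_pos_iff.mpr h0.1
    have hβpos : 0 < ‖b‖ := norm_pos_iff.mpr h0.2
    have hXY : (a * (starRingEnd ℂ) b).re^2 + (a * (starRingEnd ℂ) b).im^2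
        = (‖a‖ * ‖b‖)^2 := by
      have h1 : ‖a * (starRingEnd ℂ) b‖ = ‖a‖ * ‖b‖ := by
        rw [norm_mul, Complex.norm_conj]
      rw [← h1, Complex.sq_norm, Complex.normSq_apply]
      ring
    rw [him, hre]
    exact step2 (p-1) (p-2) (a * (starRingEnd ℂ) b).re (a * (starRingEnd ℂ) b).im
      (‖a‖ * ‖b‖)
      ((‖a‖)^2*(‖a‖)^(p-2) + (‖b‖)^2*(‖b‖)^(p-2))
      ((‖a‖)^(p-2) + (‖b‖)^(p-2))
      ((‖a‖)^(p-2) - (‖b‖)^(p-2))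
      (by linarith) hXY (L5 p (‖a‖) (‖b‖) hp hαpos hβpos)

theorem rotated_product_in_sector (p : ℝ) (hp : 1 < p) (lam w z : ℂ)
    (hlam : ‖lam‖ = 1) :
    (lam * w - z) * (starRingEnd ℂ) (lam * Fp p w - Fp p z) ∈
      Sector (Real.arcsin |1 - 2 / p|) := by
  have hp0 : (0:ℝ) < p := by linarith
  have hFp : lam * Fp p w = Fp p (lam * w) := by
    rw [Fp_eq p w, Fp_eq p (lam * w), norm_mul, hlam, one_mul]
    ring
  rw [hFp]
  obtain ⟨hRe, hIm⟩ := main_bounds p hp (lam * w) z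
  set ζ := (lam * w - z) * (starRingEnd ℂ) (Fp p (lam * w) - Fp p z) with hζ
  simp only [Sector, Set.mem_setOf_eq]
  by_cases h0 : ζ = 0
  · exact Or.inl h0
  right
  have habs : 0 < ‖ζ‖ := norm_pos_iff.mpr h0
  have hs1 : |1 - 2/p| ≤ 1 := by
    rw [abs_le]
    constructor
    · have : 2/p ≤ 2 := by rw [div_le_iff₀ hp0]; linarith
      linarith
    · have : 0 < 2/p := by positivity
      linarith
  have habs2 : (‖ζ‖)^2 = ζ.re^2 + ζ.im^2 := by
    rw [Complex.sq_norm, Complex.normSq_apply]; ring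
  have him : |ζ.im| ≤ |1 - 2/p| * ‖ζ‖ := by
    have h2 : ζ.im^2 ≤ (|1 - 2/p| * ‖ζ‖)^2 := by
      rw [mul_pow, _root_.sq_abs, habs2, show (1 - 2/p)^2 = (p-2)^2/p^2 by field_simp,
        div_mul_eq_mul_div, le_div_iff₀ (by positivity : (0:ℝ) < p^2)]
      linarith [hIm]
    calc |ζ.im| = Real.sqrt (ζ.im^2) := (Real.sqrt_sq_eq_abs _).symm
      _ ≤ Real.sqrt ((|1 - 2/p| * ‖ζ‖)^2) := Real.sqrt_le_sqrt h2
      _ = |1 - 2/p| * ‖ζ‖ := Real.sqrt_sq (by positivity)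
  have hargpi : |ζ.arg| ≤ Real.pi/2 := Complex.abs_arg_le_pi_div_two_iff.2 hRe
  have harg0 : -(Real.pi/2) ≤ |ζ.arg| := by
    have := abs_nonneg ζ.arg
    have := Real.pi_pos
    linarith
  rw [Real.le_arcsin_iff_sin_le ⟨harg0, hargpi⟩ ⟨by linarith [abs_nonneg (1-2/p)], hs1⟩]
  have hsin : Real.sin |ζ.arg| ≤ |Real.sin ζ.arg| := by
    rcases abs_cases ζ.arg with ⟨h, _⟩ | ⟨h, _⟩
    · rw [h]; exact le_abs_self _
    · rw [h, Real.sin_neg]; exact neg_le_abs _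
  have h3 : |Real.sin ζ.arg| ≤ |1 - 2/p| := by
    rw [Complex.sin_arg, abs_div, abs_of_pos habs, div_le_iff₀ habs]
    exact him
  linarith
end
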